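/- arXiv:2512.10177 — 2 statements merged into one kernel-verified Lean document; each statement's English description precedes it below -/
import Mathlib

section
/- Let a ≥ b ≥ 1 and let T = B(3, a, b) be the double broom of order n = a + b + 3. Then the number of edges of the Bell 3-coloring graph B_3(T) is (2(a + b) + 1)·2^{a+b−1} + 2^a + 2^b − 1. -/
open SimpleGraph

variable {V : Type*} [Fintype V] [DecidableEq V]

/-- Delete the vertex `v` from its part: `P − v`. -/
def eraseVtx (P : Multiset (Finset V)) (v : V) : Multiset (Finset V) :=
  P.map (fun s => s.erase v)

/-- A stable `k`-partition of `G`: a multiset of exactly `k` independent sets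
(empty parts allowed) that are pairwise disjoint and whose union is `V(G)`.
(Pairwise disjointness together with covering is encoded by requiring that the
multiset sum of the parts is exactly the multiset of all vertices.) -/
def IsStablePartition (G : SimpleGraph V) (k : ℕ) (P : Multiset (Finset V)) : Prop :=
  Multiset.card P = k ∧ (P.map Finset.val).sum = (Finset.univ : Finset V).val ∧
    ∀ s ∈ P, ∀ a ∈ s, ∀ b ∈ s, ¬ G.Adj a b

/-- The Bell `k`-coloring graph of `G`. -/
def bellGraph (G : SimpleGraph V) (k : ℕ) :
    SimpleGraph {P : Multiset (Finset V) // IsStablePartition G k P} where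
  Adj P Q := P ≠ Q ∧ ∃ v : V, eraseVtx P.1 v = eraseVtx Q.1 v
  symm := by
    constructor
    rintro P Q ⟨hne, v, hv⟩
    exact ⟨hne.symm, v, hv.symm⟩
  loopless := by
    constructor
    rintro P ⟨hne, _⟩
    exact hne rfl

/-- The double broom `B(3, a, b)`: a path `u–v–w` (vertices `0, 1, 2`)
together with `a` leaves adjacent to `u` (vertices `3, …, a + 2`) and `b`
leaves adjacent to `w` (vertices `a + 3, …, a + b + 2`). -/
def doubleBroom (a b : ℕ) : SimpleGraph (Fin (a + b + 3)) :=
  SimpleGraph.fromRel (fun x y =>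
    ((x : ℕ) = 0 ∧ (y : ℕ) = 1) ∨ ((x : ℕ) = 1 ∧ (y : ℕ) = 2) ∨
    ((x : ℕ) = 0 ∧ 3 ≤ (y : ℕ) ∧ (y : ℕ) < 3 + a) ∨
    ((x : ℕ) = 2 ∧ 3 + a ≤ (y : ℕ)))

namespace DB

variable (a b : ℕ)

/-- vertex `u`. -/
def uu : Fin (a + b + 3) := ⟨0, by omega⟩
/-- vertex `v`. -/
def vv : Fin (a + b + 3) := ⟨1, by omega⟩
/-- vertex `w`. -/
def ww : Fin (a + b + 3) := ⟨2, by omega⟩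

/-- the leaves adjacent to `u`. -/
def Aset : Finset (Fin (a + b + 3)) :=
  Finset.univ.filter (fun x => 3 ≤ (x : ℕ) ∧ (x : ℕ) < 3 + a)
/-- the leaves adjacent to `w`. -/
def Bset : Finset (Fin (a + b + 3)) :=
  Finset.univ.filter (fun x => 3 + a ≤ (x : ℕ))
/-- all leaves. -/
def Lset : Finset (Fin (a + b + 3)) :=
  Finset.univ.filter (fun x => 3 ≤ (x : ℕ))

@[simp] lemma uu_val : ((uu a b : Fin (a+b+3)) : ℕ) = 0 := rfl
@[simp] lemma vv_val : ((vv a b : Fin (a+b+3)) : ℕ) = 1 := rfl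
@[simp] lemma ww_val : ((ww a b : Fin (a+b+3)) : ℕ) = 2 := rfl

@[simp] lemma mem_Aset {x : Fin (a+b+3)} : x ∈ Aset a b ↔ 3 ≤ (x : ℕ) ∧ (x : ℕ) < 3 + a := by
  simp [Aset]

@[simp] lemma mem_Bset {x : Fin (a+b+3)} : x ∈ Bset a b ↔ 3 + a ≤ (x : ℕ) := by
  simp [Bset]

@[simp] lemma mem_Lset {x : Fin (a+b+3)} : x ∈ Lset a b ↔ 3 ≤ (x : ℕ) := by
  simp [Lset]

lemma eq_of_val {x y : Fin (a+b+3)} (h : (x : ℕ) = (y : ℕ)) : x = y := Fin.ext h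

lemma card_Lset : (Lset a b).card = a + b := by
  have himg : Lset a b =
      Finset.image (fun i : Fin (a+b) => (⟨3 + i.1, by omega⟩ : Fin (a+b+3))) Finset.univ := by
    ext x
    simp only [mem_Lset, Finset.mem_image, Finset.mem_univ, true_and]
    constructor
    · intro h3
      exact ⟨⟨(x : ℕ) - 3, by omega⟩, by apply Fin.ext; simp; omega⟩
    · rintro ⟨i, rfl⟩; simp
  rw [himg, Finset.card_image_of_injective _ (fun i j h => by
    apply Fin.ext
    have := congrArg Fin.val h
    simpa using this)]
  simp

lemma card_Aset : (Aset a b).card = a := by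
  have himg : Aset a b =
      Finset.image (fun i : Fin a => (⟨3 + i.1, by omega⟩ : Fin (a+b+3))) Finset.univ := by
    ext x
    simp only [mem_Aset, Finset.mem_image, Finset.mem_univ, true_and]
    constructor
    · intro h3
      exact ⟨⟨(x : ℕ) - 3, by omega⟩, by apply Fin.ext; simp; omega⟩
    · rintro ⟨i, rfl⟩; simp
  rw [himg, Finset.card_image_of_injective _ (fun i j h => by
    apply Fin.ext
    have := congrArg Fin.val h
    simpa using this)]
  simp

lemma card_Bset : (Bset a b).card = b := by
  have himg : Bset a b =
      Finset.image (fun i : Fin b => (⟨3 + a + i.1, by omega⟩ : Fin (a+b+3))) Finset.univ := by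
    ext x
    simp only [mem_Bset, Finset.mem_image, Finset.mem_univ, true_and]
    constructor
    · intro h3
      exact ⟨⟨(x : ℕ) - 3 - a, by omega⟩, by apply Fin.ext; simp; omega⟩
    · rintro ⟨i, rfl⟩; simp
  rw [himg, Finset.card_image_of_injective _ (fun i j h => by
    apply Fin.ext
    have := congrArg Fin.val h
    simpa using this)]
  simp

lemma Aset_subset_Lset : Aset a b ⊆ Lset a b := fun x hx => by
  simp at hx ⊢; omega

lemma Bset_subset_Lset : Bset a b ⊆ Lset a b := fun x hx => by
  simp at hx ⊢; omega

/-- Adjacency in the double broom, unfolded. -/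
lemma broom_adj (x y : Fin (a+b+3)) :
    (doubleBroom a b).Adj x y ↔ x ≠ y ∧
      ((((x : ℕ) = 0 ∧ (y : ℕ) = 1) ∨ ((x : ℕ) = 1 ∧ (y : ℕ) = 2) ∨
        ((x : ℕ) = 0 ∧ 3 ≤ (y : ℕ) ∧ (y : ℕ) < 3 + a) ∨
        ((x : ℕ) = 2 ∧ 3 + a ≤ (y : ℕ))) ∨
       (((y : ℕ) = 0 ∧ (x : ℕ) = 1) ∨ ((y : ℕ) = 1 ∧ (x : ℕ) = 2) ∨
        ((y : ℕ) = 0 ∧ 3 ≤ (x : ℕ) ∧ (x : ℕ) < 3 + a) ∨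
        ((y : ℕ) = 2 ∧ 3 + a ≤ (x : ℕ)))) :=
  SimpleGraph.fromRel_adj _ x y

lemma not_adj_mid {x y : Fin (a+b+3)} (hx : (x : ℕ) = 1 ∨ 3 ≤ (x : ℕ))
    (hy : (y : ℕ) = 1 ∨ 3 ≤ (y : ℕ)) : ¬ (doubleBroom a b).Adj x y := by
  rw [broom_adj]; rintro ⟨-, h⟩; omega

lemma not_adj_uw {x y : Fin (a+b+3)} (hx : (x : ℕ) = 0 ∨ (x : ℕ) = 2)
    (hy : (y : ℕ) = 0 ∨ (y : ℕ) = 2) : ¬ (doubleBroom a b).Adj x y := by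
  rw [broom_adj]; rintro ⟨hne, h⟩
  have : (x : ℕ) ≠ (y : ℕ) ∨ (x : ℕ) = (y : ℕ) := by omega
  omega

lemma not_adj_uB {x y : Fin (a+b+3)} (hx : (x : ℕ) = 0 ∨ 3 + a ≤ (x : ℕ))
    (hy : (y : ℕ) = 0 ∨ 3 + a ≤ (y : ℕ)) : ¬ (doubleBroom a b).Adj x y := by
  rw [broom_adj]; rintro ⟨-, h⟩; omega

lemma not_adj_wA {x y : Fin (a+b+3)} (hx : (x : ℕ) = 2 ∨ (3 ≤ (x : ℕ) ∧ (x : ℕ) < 3 + a))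
    (hy : (y : ℕ) = 2 ∨ (3 ≤ (y : ℕ) ∧ (y : ℕ) < 3 + a)) : ¬ (doubleBroom a b).Adj x y := by
  rw [broom_adj]; rintro ⟨-, h⟩; omega

lemma adj_uv : (doubleBroom a b).Adj (uu a b) (vv a b) := by
  rw [broom_adj]
  refine ⟨fun h => by simpa using congrArg Fin.val h, ?_⟩
  simp

lemma adj_vw : (doubleBroom a b).Adj (vv a b) (ww a b) := by
  rw [broom_adj]
  refine ⟨fun h => by simpa using congrArg Fin.val h, ?_⟩
  simp

lemma adj_uA {x : Fin (a+b+3)} (hx : x ∈ Aset a b) : (doubleBroom a b).Adj (uu a b) x := by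
  rw [broom_adj]
  simp at hx
  refine ⟨fun h => by have := congrArg Fin.val h; simp at this; omega, ?_⟩
  simp; omega

lemma adj_wB {x : Fin (a+b+3)} (hx : x ∈ Bset a b) : (doubleBroom a b).Adj (ww a b) x := by
  rw [broom_adj]
  simp at hx
  refine ⟨fun h => by have := congrArg Fin.val h; simp at this; omega, ?_⟩
  simp; omega


@[simp] lemma eq_uu_iff {x : Fin (a+b+3)} : x = uu a b ↔ (x : ℕ) = 0 :=
  ⟨fun h => by simp [h], fun h => eq_of_val a b (by simp [h])⟩

@[simp] lemma eq_vv_iff {x : Fin (a+b+3)} : x = vv a b ↔ (x : ℕ) = 1 :=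
  ⟨fun h => by simp [h], fun h => eq_of_val a b (by simp [h])⟩

@[simp] lemma eq_ww_iff {x : Fin (a+b+3)} : x = ww a b ↔ (x : ℕ) = 2 :=
  ⟨fun h => by simp [h], fun h => eq_of_val a b (by simp [h])⟩

/-- The encoding of stable 3-partitions of the double broom.
`false` = type I (`u,w` together), `true` = type II (`u,v,w` separate). -/
def enc : Bool → Finset (Fin (a+b+3)) → Multiset (Finset (Fin (a+b+3)))
  | false, S => {{uu a b, ww a b}, insert (vv a b) (Lset a b \ S), S}
  | true, S => {insert (uu a b) (S ∩ Bset a b), insert (ww a b) (S ∩ Aset a b),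
      insert (vv a b) (Lset a b \ S)}

lemma fcount {α : Type*} [DecidableEq α] (s : Finset α) (x : α) :
    s.val.count x = if x ∈ s then 1 else 0 := by
  split_ifs with h
  · exact le_antisymm (Multiset.nodup_iff_count_le_one.1 s.nodup x)
      (Multiset.one_le_count_iff_mem.2 h)
  · exact Multiset.count_eq_zero.2 h

lemma sum3_val {α : Type*} [Fintype α] [DecidableEq α] (p q r : Finset α)
    (hcov : ∀ x, x ∈ p ∨ x ∈ q ∨ x ∈ r) (hpq : ∀ x, x ∈ p → x ∉ q)
    (hpr : ∀ x, x ∈ p → x ∉ r) (hqr : ∀ x, x ∈ q → x ∉ r) :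
    (Multiset.map Finset.val ({p, q, r} : Multiset (Finset α))).sum
      = (Finset.univ : Finset α).val := by
  apply Multiset.ext.2
  intro x
  have h1 := hcov x; have h2 := hpq x; have h3 := hpr x; have h4 := hqr x
  simp only [Multiset.insert_eq_cons, Multiset.map_cons, Multiset.map_singleton,
    Multiset.sum_cons, Multiset.sum_singleton, Multiset.count_add, fcount,
    Finset.mem_univ, if_true]
  split_ifs <;> first | rfl | (exfalso; tauto)

lemma enc_stable {c : Bool} {S : Finset (Fin (a+b+3))} (hS : S ⊆ Lset a b) :
    IsStablePartition (doubleBroom a b) 3 (enc a b c S) := by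
  have hSv : ∀ x ∈ S, 3 ≤ (x : ℕ) := fun x hx => (mem_Lset a b).1 (hS hx)
  cases c
  · -- type I
    refine ⟨by simp [enc], ?_, ?_⟩
    · refine sum3_val _ _ _ ?_ ?_ ?_ ?_
      · intro x
        by_cases h0 : (x : ℕ) = 0
        · exact Or.inl (by simp [h0])
        by_cases h2 : (x : ℕ) = 2
        · exact Or.inl (by simp [h2])
        by_cases h1 : (x : ℕ) = 1
        · exact Or.inr (Or.inl (by simp [h1]))
        by_cases hxS : x ∈ S
        · exact Or.inr (Or.inr hxS)
        · refine Or.inr (Or.inl ?_)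
          simp only [Finset.mem_insert, Finset.mem_sdiff, mem_Lset]
          right; exact ⟨by omega, hxS⟩
      · intro x hx hx'
        simp only [Finset.mem_insert, Finset.mem_singleton, eq_uu_iff, eq_ww_iff] at hx
        simp only [Finset.mem_insert, eq_vv_iff, Finset.mem_sdiff, mem_Lset] at hx'
        rcases hx' with h | h
        · omega
        · have := h.1; omega
      · intro x hx hx'
        simp only [Finset.mem_insert, Finset.mem_singleton, eq_uu_iff, eq_ww_iff] at hx
        have := hSv x hx'; omega
      · intro x hx hx'
        simp only [Finset.mem_insert, eq_vv_iff, Finset.mem_sdiff, mem_Lset] at hx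
        rcases hx with h | h
        · have := hSv x hx'; omega
        · exact h.2 hx'
    · intro s hs
      simp only [enc, Multiset.insert_eq_cons, Multiset.mem_cons, Multiset.mem_singleton] at hs
      rcases hs with rfl | rfl | rfl
      · intro x hx y hy
        simp only [Finset.mem_insert, Finset.mem_singleton, eq_uu_iff, eq_ww_iff] at hx hy
        exact not_adj_uw a b hx hy
      · intro x hx y hy
        simp only [Finset.mem_insert, eq_vv_iff, Finset.mem_sdiff, mem_Lset] at hx hy
        refine not_adj_mid a b ?_ ?_ <;> omega
      · intro x hx y hy
        exact not_adj_mid a b (Or.inr (hSv x hx)) (Or.inr (hSv y hy))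
  · -- type II
    refine ⟨by simp [enc], ?_, ?_⟩
    · refine sum3_val _ _ _ ?_ ?_ ?_ ?_
      · intro x
        have hlt := x.isLt
        by_cases h0 : (x : ℕ) = 0
        · exact Or.inl (by simp [h0])
        by_cases h2 : (x : ℕ) = 2
        · exact Or.inr (Or.inl (by simp [h2]))
        by_cases h1 : (x : ℕ) = 1
        · exact Or.inr (Or.inr (by simp [h1]))
        by_cases hxS : x ∈ S
        · by_cases hA : (x : ℕ) < 3 + a
          · refine Or.inr (Or.inl ?_)
            simp only [Finset.mem_insert, Finset.mem_inter, mem_Aset]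
            right; exact ⟨hxS, hSv x hxS, hA⟩
          · refine Or.inl ?_
            simp only [Finset.mem_insert, Finset.mem_inter, mem_Bset]
            right; exact ⟨hxS, by omega⟩
        · refine Or.inr (Or.inr ?_)
          simp only [Finset.mem_insert, Finset.mem_sdiff, mem_Lset]
          right; exact ⟨by omega, hxS⟩
      · intro x hx hx'
        simp only [Finset.mem_insert, eq_uu_iff, Finset.mem_inter, mem_Bset] at hx
        simp only [Finset.mem_insert, eq_ww_iff, Finset.mem_inter, mem_Aset] at hx'
        omega
      · intro x hx hx'
        simp only [Finset.mem_insert, eq_uu_iff, Finset.mem_inter, mem_Bset] at hx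
        simp only [Finset.mem_insert, eq_vv_iff, Finset.mem_sdiff, mem_Lset] at hx'
        rcases hx with h | h
        · omega
        · rcases hx' with h' | h'
          · omega
          · exact h'.2 h.1
      · intro x hx hx'
        simp only [Finset.mem_insert, eq_ww_iff, Finset.mem_inter, mem_Aset] at hx
        simp only [Finset.mem_insert, eq_vv_iff, Finset.mem_sdiff, mem_Lset] at hx'
        rcases hx with h | h
        · omega
        · rcases hx' with h' | h'
          · omega
          · exact h'.2 h.1
    · intro s hs
      simp only [enc, Multiset.insert_eq_cons, Multiset.mem_cons, Multiset.mem_singleton] at hs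
      rcases hs with rfl | rfl | rfl
      · intro x hx y hy
        simp only [Finset.mem_insert, eq_uu_iff, Finset.mem_inter, mem_Bset] at hx hy
        refine not_adj_uB a b ?_ ?_ <;> tauto
      · intro x hx y hy
        simp only [Finset.mem_insert, eq_ww_iff, Finset.mem_inter, mem_Aset] at hx hy
        refine not_adj_wA a b ?_ ?_
        · rcases hx with h | h
          · exact Or.inl h
          · exact Or.inr ⟨hSv x h.1, h.2.2⟩
        · rcases hy with h | h
          · exact Or.inl h
          · exact Or.inr ⟨hSv y h.1, h.2.2⟩
      · intro x hx y hy
        simp only [Finset.mem_insert, eq_vv_iff, Finset.mem_sdiff, mem_Lset] at hx hy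
        refine not_adj_mid a b ?_ ?_ <;> omega

/-! ### Multiset helpers -/

lemma swap12 {α : Type*} (p q r : α) : ({p, q, r} : Multiset α) = {q, p, r} :=
  Multiset.cons_swap p q {r}

lemma swap23 {α : Type*} (p q r : α) : ({p, q, r} : Multiset α) = {p, r, q} :=
  congrArg (p ::ₘ ·) (Multiset.cons_swap q r 0)

lemma rot3 {α : Type*} (p q r : α) : ({p, q, r} : Multiset α) = {q, r, p} :=
  (swap12 p q r).trans (swap23 q p r)

lemma two_eq {α : Type*} [DecidableEq α] {q r q' r' : α}
    (h : ({q, r} : Multiset α) = {q', r'}) : (q = q' ∧ r = r') ∨ (q = r' ∧ r = q') := by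
  rcases Multiset.cons_eq_cons.1 h with ⟨rfl, h2⟩ | ⟨hne, cs, h1, h2⟩
  · left; exact ⟨rfl, by simpa using h2⟩
  · obtain ⟨rfl, rfl⟩ := (Multiset.singleton_eq_cons_iff _).1 h1
    obtain ⟨rfl, -⟩ := (Multiset.singleton_eq_cons_iff _).1 h2
    right; exact ⟨rfl, rfl⟩

lemma pick2_mark {α : Type*} [DecidableEq α] {q r q' r' : Finset α} {x : α}
    (h : ({q, r} : Multiset (Finset α)) = {q', r'}) (hx : x ∈ q) (hr' : x ∉ r') :
    q = q' ∧ r = r' := by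
  rcases two_eq h with ⟨h1, h2⟩ | ⟨h1, h2⟩
  · exact ⟨h1, h2⟩
  · exact absurd (h1 ▸ hx) hr'

lemma eq3_1 {α : Type*} [DecidableEq α] {p q r p' q' r' : Finset α} {x : α}
    (h : ({p, q, r} : Multiset (Finset α)) = {p', q', r'})
    (hx : x ∈ p) (hq' : x ∉ q') (hr' : x ∉ r') :
    p = p' ∧ ({q, r} : Multiset (Finset α)) = {q', r'} := by
  have hp : p ∈ ({p', q', r'} : Multiset (Finset α)) := by rw [← h]; simp
  simp only [Multiset.insert_eq_cons, Multiset.mem_cons, Multiset.mem_singleton] at hp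
  rcases hp with h' | h' | h'
  · subst h'
    refine ⟨rfl, ?_⟩
    rwa [show ({p, q, r} : Multiset (Finset α)) = p ::ₘ {q, r} from rfl,
      show ({p, q', r'} : Multiset (Finset α)) = p ::ₘ {q', r'} from rfl,
      Multiset.cons_inj_right] at h
  · exact absurd (h' ▸ hx) hq'
  · exact absurd (h' ▸ hx) hr'

lemma insert_cancel {α : Type*} [DecidableEq α] {x : α} {X Y : Finset α}
    (hX : x ∉ X) (hY : x ∉ Y) (h : insert x X = insert x Y) : X = Y := by
  rw [← Finset.erase_insert hX, h, Finset.erase_insert hY]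

/-! ### Injectivity of the encoding -/

lemma uu_not_mem_vpart {S : Finset (Fin (a+b+3))} : uu a b ∉ insert (vv a b) (Lset a b \ S) := by
  simp

lemma ww_not_mem_vpart {S : Finset (Fin (a+b+3))} : ww a b ∉ insert (vv a b) (Lset a b \ S) := by
  simp

lemma not_mem_of_sub_L {x : Fin (a+b+3)} {S : Finset (Fin (a+b+3))} (hS : S ⊆ Lset a b)
    (hx : (x : ℕ) < 3) : x ∉ S := fun h => by have := (mem_Lset a b).1 (hS h); omega

lemma inter_A_B_split {S : Finset (Fin (a+b+3))} (hS : S ⊆ Lset a b) {T : Finset (Fin (a+b+3))}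
    (hA : S ∩ Aset a b = T ∩ Aset a b) (hB : S ∩ Bset a b = T ∩ Bset a b)
    (hT : T ⊆ Lset a b) : S = T := by
  ext x
  constructor
  · intro hx
    have h3 := (mem_Lset a b).1 (hS hx)
    by_cases hlt : (x : ℕ) < 3 + a
    · have : x ∈ T ∩ Aset a b := by rw [← hA]; simp [hx, h3, hlt]
      exact (Finset.mem_inter.1 this).1
    · have : x ∈ T ∩ Bset a b := by rw [← hB]; simp [hx]; omega
      exact (Finset.mem_inter.1 this).1
  · intro hx
    have h3 := (mem_Lset a b).1 (hT hx)
    by_cases hlt : (x : ℕ) < 3 + a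
    · have : x ∈ S ∩ Aset a b := by rw [hA]; simp [hx, h3, hlt]
      exact (Finset.mem_inter.1 this).1
    · have : x ∈ S ∩ Bset a b := by rw [hB]; simp [hx]; omega
      exact (Finset.mem_inter.1 this).1

lemma enc_FT_ne {S T : Finset (Fin (a+b+3))} (hS : S ⊆ Lset a b) :
    enc a b false S ≠ enc a b true T := by
  intro h
  have hmem : ({uu a b, ww a b} : Finset (Fin (a+b+3))) ∈ enc a b true T := by
    rw [← h]; simp [enc]
  simp only [enc, Multiset.insert_eq_cons, Multiset.mem_cons, Multiset.mem_singleton] at hmem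
  rcases hmem with h' | h' | h'
  · have hw : ww a b ∈ insert (uu a b) (T ∩ Bset a b) := by rw [← h']; simp
    simp only [Finset.mem_insert, eq_uu_iff, Finset.mem_inter, mem_Bset, ww_val] at hw
    omega
  · have hu : uu a b ∈ insert (ww a b) (T ∩ Aset a b) := by rw [← h']; simp
    simp only [Finset.mem_insert, eq_ww_iff, Finset.mem_inter, mem_Aset, uu_val] at hu
    omega
  · have hu : uu a b ∈ insert (vv a b) (Lset a b \ T) := by rw [← h']; simp
    simp only [Finset.mem_insert, eq_vv_iff, Finset.mem_sdiff, mem_Lset, uu_val] at hu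
    omega

lemma enc_inj {c c' : Bool} {S T : Finset (Fin (a+b+3))} (hS : S ⊆ Lset a b)
    (hT : T ⊆ Lset a b) (h : enc a b c S = enc a b c' T) : c = c' ∧ S = T := by
  cases c <;> cases c'
  · -- false false
    refine ⟨rfl, ?_⟩
    have h' : ({({uu a b, ww a b} : Finset (Fin (a+b+3))), insert (vv a b) (Lset a b \ S), S} :
        Multiset (Finset (Fin (a+b+3)))) = {{uu a b, ww a b}, insert (vv a b) (Lset a b \ T), T} := h
    obtain ⟨-, h2⟩ := eq3_1 h' (x := uu a b) (by simp) (uu_not_mem_vpart a b)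
      (not_mem_of_sub_L a b hT (by simp))
    obtain ⟨-, h3⟩ := pick2_mark h2 (x := vv a b) (by simp)
      (not_mem_of_sub_L a b hT (by simp))
    exact h3
  · exact absurd h (enc_FT_ne a b hS)
  · exact absurd h.symm (enc_FT_ne a b hT)
  · -- true true
    refine ⟨rfl, ?_⟩
    have h' : ({insert (uu a b) (S ∩ Bset a b), insert (ww a b) (S ∩ Aset a b),
        insert (vv a b) (Lset a b \ S)} : Multiset (Finset (Fin (a+b+3)))) =
        {insert (uu a b) (T ∩ Bset a b), insert (ww a b) (T ∩ Aset a b),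
        insert (vv a b) (Lset a b \ T)} := h
    obtain ⟨h1, h2⟩ := eq3_1 h' (x := uu a b) (by simp)
      (by simp) (uu_not_mem_vpart a b)
    obtain ⟨h3, -⟩ := pick2_mark h2 (x := ww a b) (by simp) (ww_not_mem_vpart a b)
    have hB : S ∩ Bset a b = T ∩ Bset a b :=
      insert_cancel (by simp) (by simp) h1
    have hA : S ∩ Aset a b = T ∩ Aset a b :=
      insert_cancel (by simp) (by simp) h3
    exact inter_A_B_split a b hS hA hB hT

/-! ### Classification -/

lemma part_props {α : Type*} [Fintype α] [DecidableEq α] {p q r : Finset α}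
    (h : (Multiset.map Finset.val ({p, q, r} : Multiset (Finset α))).sum
      = (Finset.univ : Finset α).val) :
    (∀ x, x ∈ p ∨ x ∈ q ∨ x ∈ r) ∧ (∀ x, x ∈ p → x ∉ q) ∧ (∀ x, x ∈ p → x ∉ r) ∧
      (∀ x, x ∈ q → x ∉ r) := by
  have key : ∀ x : α, (if x ∈ p then 1 else 0) + ((if x ∈ q then 1 else 0) +
      ((if x ∈ r then 1 else 0))) = 1 := by
    intro x
    have hc := congrArg (Multiset.count x) h
    simpa [Multiset.insert_eq_cons, Multiset.map_cons, Multiset.map_singleton,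
      Multiset.sum_cons, Multiset.sum_singleton, Multiset.count_add, fcount] using hc
  refine ⟨?_, ?_, ?_, ?_⟩
  · intro x
    by_contra hc
    push_neg at hc
    have := key x
    rw [if_neg hc.1, if_neg hc.2.1, if_neg hc.2.2] at this
    omega
  · intro x h1 h2
    have := key x
    rw [if_pos h1, if_pos h2] at this
    split_ifs at this <;> omega
  · intro x h1 h2
    have := key x
    rw [if_pos h1, if_pos h2] at this
    split_ifs at this <;> omega
  · intro x h1 h2
    have := key x
    rw [if_pos h1, if_pos h2] at this
    split_ifs at this <;> omega

lemma classify_auxI {p q r : Finset (Fin (a+b+3))}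
    (hcov : ∀ x, x ∈ p ∨ x ∈ q ∨ x ∈ r) (d1 : ∀ x, x ∈ p → x ∉ q)
    (d2 : ∀ x, x ∈ p → x ∉ r) (d3 : ∀ x, x ∈ q → x ∉ r)
    (hqI : ∀ x ∈ q, ∀ y ∈ q, ¬ (doubleBroom a b).Adj x y)
    (hv : vv a b ∈ p) (hu : uu a b ∈ q) (hw : ww a b ∈ q) :
    r ⊆ Lset a b ∧ ({p, q, r} : Multiset (Finset (Fin (a+b+3)))) = enc a b false r := by
  have hq_eq : q = {uu a b, ww a b} := by
    ext x
    simp only [Finset.mem_insert, Finset.mem_singleton, eq_uu_iff, eq_ww_iff]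
    constructor
    · intro hxq
      by_contra hcon
      push_neg at hcon
      have hx1 : (x : ℕ) ≠ 1 := fun h =>
        d1 _ hv (by rwa [show x = vv a b from eq_of_val a b (by simp [h])] at hxq)
      have hx3 : 3 ≤ (x : ℕ) := by omega
      by_cases hA : (x : ℕ) < 3 + a
      · exact hqI _ hu _ hxq (adj_uA a b (by simp; omega))
      · exact hqI _ hw _ hxq (adj_wB a b (by simp; omega))
    · rintro (h | h)
      · have : x = uu a b := eq_of_val a b (by simp [h])
        rw [this]; exact hu
      · have : x = ww a b := eq_of_val a b (by simp [h])
        rw [this]; exact hw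
  have hr_sub : r ⊆ Lset a b := by
    intro x hxr
    simp only [mem_Lset]
    by_contra h3
    push_neg at h3
    by_cases e0 : (x : ℕ) = 0
    · exact d3 _ hu ((show x = uu a b from eq_of_val a b (by simp [e0])) ▸ hxr)
    by_cases e1 : (x : ℕ) = 1
    · exact d2 _ hv ((show x = vv a b from eq_of_val a b (by simp [e1])) ▸ hxr)
    by_cases e2 : (x : ℕ) = 2
    · exact d3 _ hw ((show x = ww a b from eq_of_val a b (by simp [e2])) ▸ hxr)
    omega
  have hp_eq : p = insert (vv a b) (Lset a b \ r) := by
    ext x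
    simp only [Finset.mem_insert, Finset.mem_sdiff, mem_Lset, eq_vv_iff]
    constructor
    · intro hxp
      by_cases h1 : (x : ℕ) = 1
      · exact Or.inl h1
      · right
        have hxq := d1 x hxp
        have hxr := d2 x hxp
        have h0 : (x : ℕ) ≠ 0 := fun h => hxq (by rw [hq_eq]; simp [h])
        have h2 : (x : ℕ) ≠ 2 := fun h => hxq (by rw [hq_eq]; simp [h])
        exact ⟨by omega, hxr⟩
    · rintro (h1 | ⟨h3, hxr⟩)
      · exact (show x = vv a b from eq_of_val a b (by simp [h1])) ▸ hv
      · rcases hcov x with h | h | h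
        · exact h
        · exfalso
          rw [hq_eq] at h
          simp only [Finset.mem_insert, Finset.mem_singleton, eq_uu_iff, eq_ww_iff] at h
          omega
        · exact absurd h hxr
  refine ⟨hr_sub, ?_⟩
  have : enc a b false r = ({({uu a b, ww a b} : Finset (Fin (a+b+3))),
      insert (vv a b) (Lset a b \ r), r} : Multiset (Finset (Fin (a+b+3)))) := rfl
  rw [this, ← hq_eq, ← hp_eq, ← swap12]

lemma classify_auxII {p q r : Finset (Fin (a+b+3))}
    (hcov : ∀ x, x ∈ p ∨ x ∈ q ∨ x ∈ r) (d1 : ∀ x, x ∈ p → x ∉ q)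
    (d2 : ∀ x, x ∈ p → x ∉ r) (d3 : ∀ x, x ∈ q → x ∉ r)
    (hqI : ∀ x ∈ q, ∀ y ∈ q, ¬ (doubleBroom a b).Adj x y)
    (hrI : ∀ x ∈ r, ∀ y ∈ r, ¬ (doubleBroom a b).Adj x y)
    (hv : vv a b ∈ p) (hu : uu a b ∈ q) (hw : ww a b ∈ r) :
    ∃ S, S ⊆ Lset a b ∧
      ({p, q, r} : Multiset (Finset (Fin (a+b+3)))) = enc a b true S := by
  set S : Finset (Fin (a+b+3)) := (q ∩ Bset a b) ∪ (r ∩ Aset a b) with hSdef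
  have hq_eq : q = insert (uu a b) (q ∩ Bset a b) := by
    ext x
    simp only [Finset.mem_insert, Finset.mem_inter, mem_Bset, eq_uu_iff]
    constructor
    · intro hxq
      by_cases h0 : (x : ℕ) = 0
      · exact Or.inl h0
      · right
        refine ⟨hxq, ?_⟩
        have hx1 : (x : ℕ) ≠ 1 := fun h =>
          d1 _ hv (by rwa [show x = vv a b from eq_of_val a b (by simp [h])] at hxq)
        have hx2 : (x : ℕ) ≠ 2 := fun h =>
          d3 _ hxq ((show x = ww a b from eq_of_val a b (by simp [h])) ▸ hw)
        by_contra hB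
        push_neg at hB
        exact hqI _ hu _ hxq (adj_uA a b (by simp; omega))
    · rintro (h | h)
      · exact (show x = uu a b from eq_of_val a b (by simp [h])) ▸ hu
      · exact h.1
  have hr_eq : r = insert (ww a b) (r ∩ Aset a b) := by
    ext x
    simp only [Finset.mem_insert, Finset.mem_inter, mem_Aset, eq_ww_iff]
    constructor
    · intro hxr
      by_cases h2 : (x : ℕ) = 2
      · exact Or.inl h2
      · right
        refine ⟨hxr, ?_⟩
        have hx1 : (x : ℕ) ≠ 1 := fun h =>
          d2 _ hv (by rwa [show x = vv a b from eq_of_val a b (by simp [h])] at hxr)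
        have hx0 : (x : ℕ) ≠ 0 := fun h =>
          d3 _ hu ((show x = uu a b from eq_of_val a b (by simp [h])).symm ▸ hxr)
        constructor
        · omega
        · by_contra hA
          push_neg at hA
          exact hrI _ hw _ hxr (adj_wB a b (by simp; omega))
    · rintro (h | h)
      · exact (show x = ww a b from eq_of_val a b (by simp [h])) ▸ hw
      · exact h.1
  have hS_sub : S ⊆ Lset a b := by
    intro x hx
    rw [hSdef] at hx
    simp only [Finset.mem_union, Finset.mem_inter, mem_Bset, mem_Aset, mem_Lset] at hx ⊢
    omega
  have hSB : S ∩ Bset a b = q ∩ Bset a b := by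
    rw [hSdef]
    ext x
    simp only [Finset.mem_inter, Finset.mem_union, mem_Bset, mem_Aset]
    constructor
    · rintro ⟨h | h, hB⟩
      · exact ⟨h.1, hB⟩
      · omega
    · intro h
      exact ⟨Or.inl h, h.2⟩
  have hSA : S ∩ Aset a b = r ∩ Aset a b := by
    rw [hSdef]
    ext x
    simp only [Finset.mem_inter, Finset.mem_union, mem_Bset, mem_Aset]
    constructor
    · rintro ⟨h | h, hA⟩
      · omega
      · exact ⟨h.1, hA⟩
    · intro h
      exact ⟨Or.inr h, h.2⟩
  have hp_eq : p = insert (vv a b) (Lset a b \ S) := by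
    ext x
    simp only [Finset.mem_insert, Finset.mem_sdiff, mem_Lset, eq_vv_iff]
    constructor
    · intro hxp
      by_cases h1 : (x : ℕ) = 1
      · exact Or.inl h1
      · right
        have hxq := d1 x hxp
        have hxr := d2 x hxp
        have h0 : (x : ℕ) ≠ 0 := fun h =>
          hxq ((show x = uu a b from eq_of_val a b (by simp [h])) ▸ hu)
        have h2 : (x : ℕ) ≠ 2 := fun h =>
          hxr ((show x = ww a b from eq_of_val a b (by simp [h])) ▸ hw)
        refine ⟨by omega, fun hxS => ?_⟩
        rw [hSdef] at hxS
        simp only [Finset.mem_union, Finset.mem_inter] at hxS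
        rcases hxS with h | h
        · exact hxq h.1
        · exact hxr h.1
    · rintro (h1 | ⟨h3, hxS⟩)
      · exact (show x = vv a b from eq_of_val a b (by simp [h1])) ▸ hv
      · rcases hcov x with h | h | h
        · exact h
        · exfalso
          rw [hq_eq] at h
          simp only [Finset.mem_insert, eq_uu_iff] at h
          rcases h with h | h
          · omega
          · exact hxS (by rw [hSdef]; exact Finset.mem_union_left _ h)
        · exfalso
          rw [hr_eq] at h
          simp only [Finset.mem_insert, eq_ww_iff] at h
          rcases h with h | h
          · omega
          · exact hxS (by rw [hSdef]; exact Finset.mem_union_right _ h)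
  refine ⟨S, hS_sub, ?_⟩
  have henc : enc a b true S = ({insert (uu a b) (S ∩ Bset a b),
      insert (ww a b) (S ∩ Aset a b), insert (vv a b) (Lset a b \ S)} :
      Multiset (Finset (Fin (a+b+3)))) := rfl
  rw [henc, hSB, hSA, ← hq_eq, ← hr_eq, ← hp_eq]
  exact rot3 p q r

lemma swap13 {α : Type*} (p q r : α) : ({p, q, r} : Multiset α) = {r, q, p} :=
  (rot3 p q r).trans (swap12 q r p)

lemma classify {P : Multiset (Finset (Fin (a+b+3)))}
    (hP : IsStablePartition (doubleBroom a b) 3 P) :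
    ∃ c S, S ⊆ Lset a b ∧ P = enc a b c S := by
  obtain ⟨p, q, r, rfl⟩ := Multiset.card_eq_three.1 hP.1
  obtain ⟨hcov, d1, d2, d3⟩ := part_props hP.2.1
  have hpI := hP.2.2 p (by simp)
  have hqI := hP.2.2 q (by simp)
  have hrI := hP.2.2 r (by simp)
  have d1' : ∀ x, x ∈ q → x ∉ p := fun x h h' => d1 x h' h
  have d2' : ∀ x, x ∈ r → x ∉ p := fun x h h' => d2 x h' h
  have d3' : ∀ x, x ∈ r → x ∉ q := fun x h h' => d3 x h' h
  rcases hcov (vv a b) with hv | hv | hv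
  · rcases hcov (uu a b) with hu | hu | hu
    · exact absurd (adj_uv a b) (hpI _ hu _ hv)
    · rcases hcov (ww a b) with hw | hw | hw
      · exact absurd (adj_vw a b) (hpI _ hv _ hw)
      · obtain ⟨hsub, heq⟩ := classify_auxI a b hcov d1 d2 d3 hqI hv hu hw
        exact ⟨false, r, hsub, heq⟩
      · obtain ⟨S, hsub, heq⟩ := classify_auxII a b hcov d1 d2 d3 hqI hrI hv hu hw
        exact ⟨true, S, hsub, heq⟩
    · rcases hcov (ww a b) with hw | hw | hw
      · exact absurd (adj_vw a b) (hpI _ hv _ hw)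
      · obtain ⟨S, hsub, heq⟩ := classify_auxII a b
          (fun x => by have := hcov x; tauto) d2 d1 d3' hrI hqI hv hu hw
        exact ⟨true, S, hsub, by rwa [swap23]⟩
      · obtain ⟨hsub, heq⟩ := classify_auxI a b
          (fun x => by have := hcov x; tauto) d2 d1 d3' hrI hv hu hw
        exact ⟨false, q, hsub, by rwa [swap23]⟩
  · rcases hcov (uu a b) with hu | hu | hu
    · rcases hcov (ww a b) with hw | hw | hw
      · obtain ⟨hsub, heq⟩ := classify_auxI a b
          (fun x => by have := hcov x; tauto) d1' d3 d2 hpI hv hu hw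
        exact ⟨false, r, hsub, by rwa [swap12]⟩
      · exact absurd (adj_vw a b) (hqI _ hv _ hw)
      · obtain ⟨S, hsub, heq⟩ := classify_auxII a b
          (fun x => by have := hcov x; tauto) d1' d3 d2 hpI hrI hv hu hw
        exact ⟨true, S, hsub, by rwa [swap12]⟩
    · exact absurd (adj_uv a b) (hqI _ hu _ hv)
    · rcases hcov (ww a b) with hw | hw | hw
      · obtain ⟨S, hsub, heq⟩ := classify_auxII a b
          (fun x => by have := hcov x; tauto) d3 d1' d2' hrI hpI hv hu hw
        exact ⟨true, S, hsub, by rwa [rot3]⟩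
      · exact absurd (adj_vw a b) (hqI _ hv _ hw)
      · obtain ⟨hsub, heq⟩ := classify_auxI a b
          (fun x => by have := hcov x; tauto) d3 d1' d2' hrI hv hu hw
        exact ⟨false, p, hsub, by rwa [rot3]⟩
  · rcases hcov (uu a b) with hu | hu | hu
    · rcases hcov (ww a b) with hw | hw | hw
      · obtain ⟨hsub, heq⟩ := classify_auxI a b
          (fun x => by have := hcov x; tauto) d2' d3' d1 hpI hv hu hw
        exact ⟨false, q, hsub, by rwa [show ({p,q,r} : Multiset (Finset (Fin (a+b+3)))) =
          {r,p,q} from (rot3 r p q).symm]⟩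
      · obtain ⟨S, hsub, heq⟩ := classify_auxII a b
          (fun x => by have := hcov x; tauto) d2' d3' d1 hpI hqI hv hu hw
        exact ⟨true, S, hsub, by rwa [show ({p,q,r} : Multiset (Finset (Fin (a+b+3)))) =
          {r,p,q} from (rot3 r p q).symm]⟩
      · exact absurd (adj_vw a b) (hrI _ hv _ hw)
    · rcases hcov (ww a b) with hw | hw | hw
      · obtain ⟨S, hsub, heq⟩ := classify_auxII a b
          (fun x => by have := hcov x; tauto) d3' d2' d1' hqI hpI hv hu hw
        exact ⟨true, S, hsub, by rwa [swap13 r q p] at heq⟩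
      · obtain ⟨hsub, heq⟩ := classify_auxI a b
          (fun x => by have := hcov x; tauto) d3' d2' d1' hqI hv hu hw
        exact ⟨false, p, hsub, by rwa [swap13 r q p] at heq⟩
      · exact absurd (adj_vw a b) (hrI _ hv _ hw)
    · exact absurd (adj_uv a b) (hrI _ hu _ hv)

/-! ### The comparison graph H -/

/-- Adjacency for the comparison graph. -/
def HAdj (x y : Bool × Finset (Fin (a+b+3))) : Prop :=
  x ≠ y ∧ x.2 ⊆ Lset a b ∧ y.2 ⊆ Lset a b ∧
    ((x.1 = y.1 ∧ ((∃ ℓ ∈ Lset a b, y.2 = symmDiff x.2 {ℓ}) ∨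
        (x.1 = false ∧ y.2 = Lset a b \ x.2))) ∨
      (x.1 ≠ y.1 ∧ x.2 = y.2 ∧ (x.2 ⊆ Aset a b ∨ x.2 ⊆ Bset a b)))

instance : DecidableRel (HAdj a b) := fun x y => by
  unfold HAdj; infer_instance

/-- The comparison graph. -/
def H : SimpleGraph (Bool × Finset (Fin (a+b+3))) where
  Adj := HAdj a b
  symm := by
    constructor
    rintro ⟨c, S⟩ ⟨c', T⟩ ⟨hne, hS, hT, hcase⟩
    refine ⟨hne.symm, hT, hS, ?_⟩
    rcases hcase with ⟨hcc, hcube | hswap⟩ | ⟨hcc, hST, hAB⟩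
    · obtain ⟨ℓ, hℓ, hTS⟩ := hcube
      exact Or.inl ⟨hcc.symm, Or.inl ⟨ℓ, hℓ, by
        simp only at hTS ⊢
        rw [hTS, symmDiff_symmDiff_cancel_right]⟩⟩
    · obtain ⟨hcf, hTS⟩ := hswap
      refine Or.inl ⟨hcc.symm, Or.inr ⟨hcc ▸ hcf, ?_⟩⟩
      simp only at hTS ⊢
      rw [hTS, Finset.sdiff_sdiff_eq_self hS]
    · exact Or.inr ⟨hcc.symm, hST.symm, hST ▸ hAB⟩
  loopless := by constructor; rintro x ⟨h, -⟩; exact h rfl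

lemma H_adj {x y : Bool × Finset (Fin (a+b+3))} : (H a b).Adj x y ↔ HAdj a b x y := Iff.rfl

instance : DecidableRel (H a b).Adj := fun x y =>
  (inferInstance : Decidable (HAdj a b x y))

/-! ### From H-adjacency to erase equality -/

lemma eraseVtx_triple {α : Type*} [DecidableEq α] (p q r : Finset α) (x : α) :
    eraseVtx ({p, q, r} : Multiset (Finset α)) x = {p.erase x, q.erase x, r.erase x} := by
  simp [eraseVtx]

lemma erase_eq_of_agree {α : Type*} [DecidableEq α] {X Y : Finset α} {ℓ : α}
    (h : ∀ x, x ≠ ℓ → (x ∈ X ↔ x ∈ Y)) : X.erase ℓ = Y.erase ℓ := by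
  ext y
  simp only [Finset.mem_erase]
  constructor
  · rintro ⟨h1, h2⟩; exact ⟨h1, (h y h1).mp h2⟩
  · rintro ⟨h1, h2⟩; exact ⟨h1, (h y h1).mpr h2⟩

lemma pair_erase_u : ({uu a b, ww a b} : Finset (Fin (a+b+3))).erase (uu a b) = {ww a b} := by
  rw [Finset.erase_insert (by simp)]

lemma pair_erase_w : ({uu a b, ww a b} : Finset (Fin (a+b+3))).erase (ww a b) = {uu a b} := by
  rw [Finset.erase_insert_of_ne (by simp), Finset.erase_singleton]
  rfl

lemma cube_erase {c : Bool} {S T : Finset (Fin (a+b+3))} {ℓ : Fin (a+b+3)}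
    (hℓ : ℓ ∈ Lset a b) (hT : T = symmDiff S {ℓ}) :
    eraseVtx (enc a b c S) ℓ = eraseVtx (enc a b c T) ℓ := by
  have key : ∀ x : Fin (a+b+3), x ≠ ℓ → (x ∈ S ↔ x ∈ T) := by
    intro x hx
    rw [hT]
    simp only [Finset.mem_symmDiff, Finset.mem_singleton]
    constructor
    · intro h; exact Or.inl ⟨h, fun h' => hx h'⟩
    · rintro (⟨h, -⟩ | ⟨h, -⟩)
      · exact h
      · exact absurd h hx
  cases c
  · have hE : eraseVtx ({({uu a b, ww a b} : Finset (Fin (a+b+3))),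
        insert (vv a b) (Lset a b \ S), S} : Multiset (Finset (Fin (a+b+3)))) ℓ =
        eraseVtx {({uu a b, ww a b} : Finset (Fin (a+b+3))),
        insert (vv a b) (Lset a b \ T), T} ℓ := by
      rw [eraseVtx_triple, eraseVtx_triple]
      rw [erase_eq_of_agree (X := insert (vv a b) (Lset a b \ S))
        (Y := insert (vv a b) (Lset a b \ T)) (fun x hx => by
          have := key x hx
          simp only [Finset.mem_insert, Finset.mem_sdiff]
          tauto),
        erase_eq_of_agree key]
    exact hE
  · have hE : eraseVtx ({insert (uu a b) (S ∩ Bset a b), insert (ww a b) (S ∩ Aset a b),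
        insert (vv a b) (Lset a b \ S)} : Multiset (Finset (Fin (a+b+3)))) ℓ =
        eraseVtx {insert (uu a b) (T ∩ Bset a b), insert (ww a b) (T ∩ Aset a b),
        insert (vv a b) (Lset a b \ T)} ℓ := by
      rw [eraseVtx_triple, eraseVtx_triple]
      rw [erase_eq_of_agree (X := insert (uu a b) (S ∩ Bset a b))
        (Y := insert (uu a b) (T ∩ Bset a b)) (fun x hx => by
          have := key x hx
          simp only [Finset.mem_insert, Finset.mem_inter]
          tauto),
        erase_eq_of_agree (X := insert (ww a b) (S ∩ Aset a b))
        (Y := insert (ww a b) (T ∩ Aset a b)) (fun x hx => by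
          have := key x hx
          simp only [Finset.mem_insert, Finset.mem_inter]
          tauto),
        erase_eq_of_agree (X := insert (vv a b) (Lset a b \ S))
        (Y := insert (vv a b) (Lset a b \ T)) (fun x hx => by
          have := key x hx
          simp only [Finset.mem_insert, Finset.mem_sdiff]
          tauto)]
    exact hE

lemma swap_erase {S : Finset (Fin (a+b+3))} (hS : S ⊆ Lset a b) :
    eraseVtx (enc a b false S) (vv a b) = eraseVtx (enc a b false (Lset a b \ S)) (vv a b) := by
  have hE1 : eraseVtx ({({uu a b, ww a b} : Finset (Fin (a+b+3))),
      insert (vv a b) (Lset a b \ S), S} : Multiset (Finset (Fin (a+b+3)))) (vv a b) =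
      {({uu a b, ww a b} : Finset (Fin (a+b+3))), Lset a b \ S, S} := by
    rw [eraseVtx_triple, Finset.erase_eq_of_notMem (by simp),
      Finset.erase_insert (by simp), Finset.erase_eq_of_notMem
        (not_mem_of_sub_L a b hS (by simp))]
  have hE2 : eraseVtx ({({uu a b, ww a b} : Finset (Fin (a+b+3))),
      insert (vv a b) (Lset a b \ (Lset a b \ S)), Lset a b \ S} :
      Multiset (Finset (Fin (a+b+3)))) (vv a b) =
      {({uu a b, ww a b} : Finset (Fin (a+b+3))), S, Lset a b \ S} := by
    rw [eraseVtx_triple, Finset.erase_eq_of_notMem (by simp),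
      Finset.erase_insert (by simp), Finset.erase_eq_of_notMem (by simp),
      Finset.sdiff_sdiff_eq_self hS]
  show eraseVtx ({({uu a b, ww a b} : Finset (Fin (a+b+3))),
      insert (vv a b) (Lset a b \ S), S} : Multiset (Finset (Fin (a+b+3)))) (vv a b) = _
  rw [hE1]
  rw [show eraseVtx (enc a b false (Lset a b \ S)) (vv a b) =
    ({({uu a b, ww a b} : Finset (Fin (a+b+3))), S, Lset a b \ S} :
      Multiset (Finset (Fin (a+b+3)))) from hE2]
  exact swap23 _ _ _

lemma inter_A_empty_of_subB {S : Finset (Fin (a+b+3))} (hB : S ⊆ Bset a b) :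
    S ∩ Aset a b = ∅ := by
  ext x
  simp only [Finset.mem_inter, mem_Aset, Finset.notMem_empty, iff_false]
  rintro ⟨hx, h1, h2⟩
  have := (mem_Bset a b).1 (hB hx)
  omega

lemma inter_B_empty_of_subA {S : Finset (Fin (a+b+3))} (hA : S ⊆ Aset a b) :
    S ∩ Bset a b = ∅ := by
  ext x
  simp only [Finset.mem_inter, mem_Bset, Finset.notMem_empty, iff_false]
  rintro ⟨hx, h1⟩
  have := (mem_Aset a b).1 (hA hx)
  omega

lemma cross_erase_B {S : Finset (Fin (a+b+3))} (hS : S ⊆ Lset a b) (hB : S ⊆ Bset a b) :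
    eraseVtx (enc a b false S) (uu a b) = eraseVtx (enc a b true S) (uu a b) := by
  have hE1 : eraseVtx ({({uu a b, ww a b} : Finset (Fin (a+b+3))),
      insert (vv a b) (Lset a b \ S), S} : Multiset (Finset (Fin (a+b+3)))) (uu a b) =
      {({ww a b} : Finset (Fin (a+b+3))), insert (vv a b) (Lset a b \ S), S} := by
    rw [eraseVtx_triple, pair_erase_u, Finset.erase_eq_of_notMem (by simp),
      Finset.erase_eq_of_notMem (not_mem_of_sub_L a b hS (by simp))]
  have hE2 : eraseVtx ({insert (uu a b) (S ∩ Bset a b), insert (ww a b) (S ∩ Aset a b),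
      insert (vv a b) (Lset a b \ S)} : Multiset (Finset (Fin (a+b+3)))) (uu a b) =
      {S, ({ww a b} : Finset (Fin (a+b+3))), insert (vv a b) (Lset a b \ S)} := by
    rw [eraseVtx_triple, Finset.erase_insert (by simp),
      Finset.erase_eq_of_notMem (by simp), Finset.erase_eq_of_notMem (by simp),
      Finset.inter_eq_left.2 hB, inter_A_empty_of_subB a b hB]
    rfl
  show eraseVtx ({({uu a b, ww a b} : Finset (Fin (a+b+3))),
      insert (vv a b) (Lset a b \ S), S} : Multiset (Finset (Fin (a+b+3)))) (uu a b) = _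
  rw [hE1, show eraseVtx (enc a b true S) (uu a b) =
    ({S, ({ww a b} : Finset (Fin (a+b+3))), insert (vv a b) (Lset a b \ S)} :
      Multiset (Finset (Fin (a+b+3)))) from hE2]
  exact (rot3 _ _ _).symm

lemma cross_erase_A {S : Finset (Fin (a+b+3))} (hS : S ⊆ Lset a b) (hA : S ⊆ Aset a b) :
    eraseVtx (enc a b false S) (ww a b) = eraseVtx (enc a b true S) (ww a b) := by
  have hE1 : eraseVtx ({({uu a b, ww a b} : Finset (Fin (a+b+3))),
      insert (vv a b) (Lset a b \ S), S} : Multiset (Finset (Fin (a+b+3)))) (ww a b) =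
      {({uu a b} : Finset (Fin (a+b+3))), insert (vv a b) (Lset a b \ S), S} := by
    rw [eraseVtx_triple, pair_erase_w, Finset.erase_eq_of_notMem (by simp),
      Finset.erase_eq_of_notMem (not_mem_of_sub_L a b hS (by simp))]
  have hE2 : eraseVtx ({insert (uu a b) (S ∩ Bset a b), insert (ww a b) (S ∩ Aset a b),
      insert (vv a b) (Lset a b \ S)} : Multiset (Finset (Fin (a+b+3)))) (ww a b) =
      {({uu a b} : Finset (Fin (a+b+3))), S, insert (vv a b) (Lset a b \ S)} := by
    rw [eraseVtx_triple, Finset.erase_insert (fun hm => by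
        obtain ⟨-, h⟩ := Finset.mem_inter.1 hm
        rw [mem_Aset] at h
        simp at h),
      Finset.erase_eq_of_notMem (fun hm => by
        rcases Finset.mem_insert.1 hm with h | h
        · exact absurd (congrArg Fin.val h) (by simp)
        · have := (mem_Bset a b).1 (Finset.mem_inter.1 h).2
          rw [ww_val] at this
          omega),
      Finset.erase_eq_of_notMem (by simp),
      Finset.inter_eq_left.2 hA, inter_B_empty_of_subA a b hA]
    rfl
  show eraseVtx ({({uu a b, ww a b} : Finset (Fin (a+b+3))),
      insert (vv a b) (Lset a b \ S), S} : Multiset (Finset (Fin (a+b+3)))) (ww a b) = _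
  rw [hE1, show eraseVtx (enc a b true S) (ww a b) =
    ({({uu a b} : Finset (Fin (a+b+3))), S, insert (vv a b) (Lset a b \ S)} :
      Multiset (Finset (Fin (a+b+3)))) from hE2]
  exact swap23 _ _ _

lemma erase_of_H {c c' : Bool} {S T : Finset (Fin (a+b+3))}
    (h : (H a b).Adj (c, S) (c', T)) :
    ∃ x, eraseVtx (enc a b c S) x = eraseVtx (enc a b c' T) x := by
  obtain ⟨hne, hS, hT, hcase⟩ := h
  rcases hcase with ⟨hcc, hcube | hswap⟩ | ⟨hcc, hST, hAB⟩
  · obtain ⟨ℓ, hℓ, hTS⟩ := hcube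
    simp only at hcc hTS
    subst hcc
    exact ⟨ℓ, cube_erase a b hℓ hTS⟩
  · obtain ⟨hcf, hTS⟩ := hswap
    simp only at hcc hcf hTS
    subst hcc; subst hcf; subst hTS
    exact ⟨vv a b, swap_erase a b hS⟩
  · simp only at hcc hST
    subst hST
    rcases hAB with hA | hB
    · cases c <;> cases c' <;> simp at hcc
      · exact ⟨ww a b, cross_erase_A a b hS hA⟩
      · exact ⟨ww a b, (cross_erase_A a b hS hA).symm⟩
    · cases c <;> cases c' <;> simp at hcc
      · exact ⟨uu a b, cross_erase_B a b hS hB⟩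
      · exact ⟨uu a b, (cross_erase_B a b hS hB).symm⟩

/-! ### From erase equality to H-adjacency -/

lemma mem_triple {α : Type*} {p q r X : α} (h : X ∈ ({p, q, r} : Multiset α)) :
    X = p ∨ X = q ∨ X = r := by simpa using h

lemma symmdiff_of_erase_eq {S T : Finset (Fin (a+b+3))} {ℓ : Fin (a+b+3)}
    (hST : S ≠ T) (h : S.erase ℓ = T.erase ℓ) : T = symmDiff S {ℓ} := by
  have hmem : ∀ y, y ≠ ℓ → (y ∈ S ↔ y ∈ T) := by
    intro y hy
    constructor <;> intro hm
    · have hme : y ∈ S.erase ℓ := Finset.mem_erase.2 ⟨hy, hm⟩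
      rw [h] at hme; exact (Finset.mem_erase.1 hme).2
    · have hme : y ∈ T.erase ℓ := Finset.mem_erase.2 ⟨hy, hm⟩
      rw [← h] at hme; exact (Finset.mem_erase.1 hme).2
  have hlm : ¬ (ℓ ∈ S ↔ ℓ ∈ T) := by
    intro hiff
    apply hST
    ext y
    by_cases hy : y = ℓ
    · subst hy; exact hiff
    · exact hmem y hy
  ext y
  simp only [Finset.mem_symmDiff, Finset.mem_singleton]
  by_cases hy : y = ℓ
  · subst hy
    constructor
    · intro hT'
      exact Or.inr ⟨rfl, fun hS' => hlm ⟨fun _ => hT', fun _ => hS'⟩⟩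
    · rintro (⟨hS', hne⟩ | ⟨-, hnS⟩)
      · exact absurd rfl hne
      · by_contra hnT
        exact hlm ⟨fun h' => (hnS h').elim, fun h' => (hnT h').elim⟩
  · have hiff := hmem y hy
    constructor
    · intro hT'
      exact Or.inl ⟨hiff.2 hT', hy⟩
    · rintro (⟨hS', -⟩ | ⟨hy', -⟩)
      · exact hiff.1 hS'
      · exact absurd hy' hy

lemma insert_erase_cancel {α : Type*} [DecidableEq α] {m x : α} {X Y : Finset α}
    (hmx : m ≠ x) (hX : m ∉ X) (hY : m ∉ Y)
    (h : (insert m X).erase x = (insert m Y).erase x) : X.erase x = Y.erase x := by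
  rw [Finset.erase_insert_of_ne hmx, Finset.erase_insert_of_ne hmx] at h
  exact insert_cancel (fun hm => hX (Finset.mem_of_mem_erase hm))
    (fun hm => hY (Finset.mem_of_mem_erase hm)) h

lemma vv_not_mem_upart {T : Finset (Fin (a+b+3))} : vv a b ∉ insert (uu a b) (T ∩ Bset a b) := by
  intro hm
  rcases Finset.mem_insert.1 hm with h | h
  · exact absurd (congrArg Fin.val h) (by simp)
  · have := (mem_Bset a b).1 (Finset.mem_inter.1 h).2
    rw [vv_val] at this; omega

lemma ww_not_mem_upart {T : Finset (Fin (a+b+3))} : ww a b ∉ insert (uu a b) (T ∩ Bset a b) := by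
  intro hm
  rcases Finset.mem_insert.1 hm with h | h
  · exact absurd (congrArg Fin.val h) (by simp)
  · have := (mem_Bset a b).1 (Finset.mem_inter.1 h).2
    rw [ww_val] at this; omega

lemma vv_not_mem_wpart {T : Finset (Fin (a+b+3))} : vv a b ∉ insert (ww a b) (T ∩ Aset a b) := by
  intro hm
  rcases Finset.mem_insert.1 hm with h | h
  · exact absurd (congrArg Fin.val h) (by simp)
  · have := ((mem_Aset a b).1 (Finset.mem_inter.1 h).2).1
    rw [vv_val] at this; omega

lemma uu_not_mem_wpart {T : Finset (Fin (a+b+3))} : uu a b ∉ insert (ww a b) (T ∩ Aset a b) := by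
  intro hm
  rcases Finset.mem_insert.1 hm with h | h
  · exact absurd (congrArg Fin.val h) (by simp)
  · have := ((mem_Aset a b).1 (Finset.mem_inter.1 h).2).1
    rw [uu_val] at this; omega

lemma uu_not_mem_upartT {T : Finset (Fin (a+b+3))} : uu a b ∉ T ∩ Bset a b := by
  intro h
  have := (mem_Bset a b).1 (Finset.mem_inter.1 h).2
  rw [uu_val] at this; omega

lemma ww_not_mem_wpartT {T : Finset (Fin (a+b+3))} : ww a b ∉ T ∩ Aset a b := by
  intro h
  have := ((mem_Aset a b).1 (Finset.mem_inter.1 h).2).1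
  rw [ww_val] at this; omega

lemma not_mem_erase_of_not_mem {α : Type*} [DecidableEq α] {m x : α} {X : Finset α}
    (h : m ∉ X) : m ∉ X.erase x := fun hm => h (Finset.mem_of_mem_erase hm)

lemma sdiff_inj_of_sub {S T : Finset (Fin (a+b+3))} (hS : S ⊆ Lset a b) (hT : T ⊆ Lset a b)
    (h : Lset a b \ S = Lset a b \ T) : S = T := by
  rw [← Finset.sdiff_sdiff_eq_self hS, h, Finset.sdiff_sdiff_eq_self hT]

lemma H_FF {S T : Finset (Fin (a+b+3))} (hS : S ⊆ Lset a b) (hT : T ⊆ Lset a b)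
    (hST : S ≠ T) (x : Fin (a+b+3))
    (hE : eraseVtx (enc a b false S) x = eraseVtx (enc a b false T) x) :
    (H a b).Adj (false, S) (false, T) := by
  refine ⟨fun h => hST (congrArg Prod.snd h), hS, hT, ?_⟩
  have hE' : ({({uu a b, ww a b} : Finset (Fin (a+b+3))).erase x,
      (insert (vv a b) (Lset a b \ S)).erase x, S.erase x} : Multiset (Finset (Fin (a+b+3)))) =
      {({uu a b, ww a b} : Finset (Fin (a+b+3))).erase x,
      (insert (vv a b) (Lset a b \ T)).erase x, T.erase x} := by
    have h0 : eraseVtx ({({uu a b, ww a b} : Finset (Fin (a+b+3))),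
        insert (vv a b) (Lset a b \ S), S} : Multiset (Finset (Fin (a+b+3)))) x =
        eraseVtx ({({uu a b, ww a b} : Finset (Fin (a+b+3))),
        insert (vv a b) (Lset a b \ T), T} : Multiset (Finset (Fin (a+b+3)))) x := hE
    rwa [eraseVtx_triple, eraseVtx_triple] at h0
  by_cases h1 : (x : ℕ) = 1
  · -- x = v : the swap move
    have hxv : x = vv a b := eq_of_val a b (by simp [h1])
    subst hxv
    rw [Finset.erase_eq_of_notMem (show vv a b ∉ ({uu a b, ww a b} : Finset (Fin (a+b+3))) by simp),
      Finset.erase_insert (show vv a b ∉ Lset a b \ S by simp),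
      Finset.erase_insert (show vv a b ∉ Lset a b \ T by simp),
      Finset.erase_eq_of_notMem (not_mem_of_sub_L a b hS (by simp)),
      Finset.erase_eq_of_notMem (not_mem_of_sub_L a b hT (by simp))] at hE'
    obtain ⟨-, h2⟩ := eq3_1 hE' (x := uu a b) (by simp) (by simp)
      (not_mem_of_sub_L a b hT (by simp))
    rcases two_eq h2 with ⟨-, hb⟩ | ⟨hc, -⟩
    · exact absurd hb hST
    · exact Or.inl ⟨rfl, Or.inr ⟨rfl, hc.symm⟩⟩
  by_cases h0 : (x : ℕ) = 0
  · -- x = u : impossible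
    exfalso
    have hxv : x = uu a b := eq_of_val a b (by simp [h0])
    subst hxv
    have hm : (insert (vv a b) (Lset a b \ S)).erase (uu a b) ∈
        ({({uu a b, ww a b} : Finset (Fin (a+b+3))).erase (uu a b),
        (insert (vv a b) (Lset a b \ T)).erase (uu a b), T.erase (uu a b)} :
        Multiset (Finset (Fin (a+b+3)))) := by
      rw [← hE']; simp
    rcases mem_triple hm with h' | h' | h'
    · have hvm : vv a b ∈ ({uu a b, ww a b} : Finset (Fin (a+b+3))).erase (uu a b) :=
        h' ▸ (by simp)
      simp [Finset.mem_erase] at hvm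
    · rw [Finset.erase_eq_of_notMem (uu_not_mem_vpart a b),
        Finset.erase_eq_of_notMem (uu_not_mem_vpart a b)] at h'
      have := insert_cancel (by simp) (by simp) h'
      exact hST (sdiff_inj_of_sub a b hS hT this)
    · have hvm : vv a b ∈ T.erase (uu a b) := h' ▸ (by simp)
      exact not_mem_of_sub_L a b hT (by simp) (Finset.mem_of_mem_erase hvm)
  by_cases h2 : (x : ℕ) = 2
  · -- x = w : impossible
    exfalso
    have hxv : x = ww a b := eq_of_val a b (by simp [h2])
    subst hxv
    have hm : (insert (vv a b) (Lset a b \ S)).erase (ww a b) ∈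
        ({({uu a b, ww a b} : Finset (Fin (a+b+3))).erase (ww a b),
        (insert (vv a b) (Lset a b \ T)).erase (ww a b), T.erase (ww a b)} :
        Multiset (Finset (Fin (a+b+3)))) := by
      rw [← hE']; simp
    rcases mem_triple hm with h' | h' | h'
    · have hvm : vv a b ∈ ({uu a b, ww a b} : Finset (Fin (a+b+3))).erase (ww a b) :=
        h' ▸ (by simp)
      simp [Finset.mem_erase] at hvm
    · rw [Finset.erase_eq_of_notMem (ww_not_mem_vpart a b),
        Finset.erase_eq_of_notMem (ww_not_mem_vpart a b)] at h'
      have := insert_cancel (by simp) (by simp) h'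
      exact hST (sdiff_inj_of_sub a b hS hT this)
    · have hvm : vv a b ∈ T.erase (ww a b) := h' ▸ (by simp)
      exact not_mem_of_sub_L a b hT (by simp) (Finset.mem_of_mem_erase hvm)
  · -- x is a leaf : hypercube move
    have hx3 : 3 ≤ (x : ℕ) := by omega
    have hux : uu a b ≠ x := fun h => by
      have := congrArg Fin.val h; rw [uu_val] at this; omega
    have hvx : vv a b ≠ x := fun h => by
      have := congrArg Fin.val h; rw [vv_val] at this; omega
    rw [Finset.erase_eq_of_notMem (show x ∉ ({uu a b, ww a b} : Finset (Fin (a+b+3))) by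
      simp only [Finset.mem_insert, Finset.mem_singleton, eq_uu_iff, eq_ww_iff]
      omega)] at hE'
    obtain ⟨-, hrest⟩ := eq3_1 hE' (x := uu a b) (by simp)
      (not_mem_erase_of_not_mem (uu_not_mem_vpart a b))
      (not_mem_erase_of_not_mem (not_mem_of_sub_L a b hT (by simp)))
    obtain ⟨-, h3⟩ := pick2_mark hrest (x := vv a b)
      (Finset.mem_erase.2 ⟨hvx, by simp⟩)
      (not_mem_erase_of_not_mem (not_mem_of_sub_L a b hT (by simp)))
    exact Or.inl ⟨rfl, Or.inl ⟨x, (mem_Lset a b).2 hx3, symmdiff_of_erase_eq a b hST h3⟩⟩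

lemma H_TT {S T : Finset (Fin (a+b+3))} (hS : S ⊆ Lset a b) (hT : T ⊆ Lset a b)
    (hST : S ≠ T) (x : Fin (a+b+3))
    (hE : eraseVtx (enc a b true S) x = eraseVtx (enc a b true T) x) :
    (H a b).Adj (true, S) (true, T) := by
  refine ⟨fun h => hST (congrArg Prod.snd h), hS, hT, ?_⟩
  have hE' : ({(insert (uu a b) (S ∩ Bset a b)).erase x, (insert (ww a b) (S ∩ Aset a b)).erase x,
      (insert (vv a b) (Lset a b \ S)).erase x} : Multiset (Finset (Fin (a+b+3)))) =
      {(insert (uu a b) (T ∩ Bset a b)).erase x, (insert (ww a b) (T ∩ Aset a b)).erase x,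
      (insert (vv a b) (Lset a b \ T)).erase x} := by
    have h0 : eraseVtx ({insert (uu a b) (S ∩ Bset a b), insert (ww a b) (S ∩ Aset a b),
        insert (vv a b) (Lset a b \ S)} : Multiset (Finset (Fin (a+b+3)))) x =
        eraseVtx ({insert (uu a b) (T ∩ Bset a b), insert (ww a b) (T ∩ Aset a b),
        insert (vv a b) (Lset a b \ T)} : Multiset (Finset (Fin (a+b+3)))) x := hE
    rwa [eraseVtx_triple, eraseVtx_triple] at h0
  by_cases h0 : (x : ℕ) = 0
  · -- x = u : impossible
    exfalso
    have hxv : x = uu a b := eq_of_val a b (by simp [h0])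
    subst hxv
    have hm : (insert (vv a b) (Lset a b \ S)).erase (uu a b) ∈
        ({(insert (uu a b) (T ∩ Bset a b)).erase (uu a b),
        (insert (ww a b) (T ∩ Aset a b)).erase (uu a b),
        (insert (vv a b) (Lset a b \ T)).erase (uu a b)} :
        Multiset (Finset (Fin (a+b+3)))) := by
      rw [← hE']; simp
    rcases mem_triple hm with h' | h' | h'
    · have hvm : vv a b ∈ (insert (uu a b) (T ∩ Bset a b)).erase (uu a b) := h' ▸ (by simp)
      exact vv_not_mem_upart a b (Finset.mem_of_mem_erase hvm)
    · have hvm : vv a b ∈ (insert (ww a b) (T ∩ Aset a b)).erase (uu a b) := h' ▸ (by simp)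
      exact vv_not_mem_wpart a b (Finset.mem_of_mem_erase hvm)
    · rw [Finset.erase_eq_of_notMem (uu_not_mem_vpart a b),
        Finset.erase_eq_of_notMem (uu_not_mem_vpart a b)] at h'
      have := insert_cancel (by simp) (by simp) h'
      exact hST (sdiff_inj_of_sub a b hS hT this)
  by_cases h1 : (x : ℕ) = 1
  · -- x = v : impossible
    exfalso
    have hxv : x = vv a b := eq_of_val a b (by simp [h1])
    subst hxv
    obtain ⟨hu, hrest⟩ := eq3_1 hE' (x := uu a b)
      (Finset.mem_erase.2 ⟨fun h => by
        have := congrArg Fin.val h; rw [uu_val, vv_val] at this; omega, by simp⟩)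
      (not_mem_erase_of_not_mem (uu_not_mem_wpart a b))
      (not_mem_erase_of_not_mem (uu_not_mem_vpart a b))
    rcases two_eq hrest with ⟨ha, -⟩ | ⟨ha, -⟩
    · rw [Finset.erase_eq_of_notMem (vv_not_mem_wpart a b),
        Finset.erase_eq_of_notMem (vv_not_mem_wpart a b)] at ha
      have hA := insert_cancel (ww_not_mem_wpartT a b) (ww_not_mem_wpartT a b) ha
      rw [Finset.erase_eq_of_notMem (vv_not_mem_upart a b),
        Finset.erase_eq_of_notMem (vv_not_mem_upart a b)] at hu
      have hB := insert_cancel (uu_not_mem_upartT a b) (uu_not_mem_upartT a b) hu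
      exact hST (inter_A_B_split a b hS hA hB hT)
    · have hwm : ww a b ∈ (insert (vv a b) (Lset a b \ T)).erase (vv a b) :=
        ha ▸ (Finset.mem_erase.2 ⟨fun h => by
          have := congrArg Fin.val h; rw [ww_val, vv_val] at this; omega, by simp⟩)
      exact ww_not_mem_vpart a b (Finset.mem_of_mem_erase hwm)
  by_cases h2 : (x : ℕ) = 2
  · -- x = w : impossible
    exfalso
    have hxv : x = ww a b := eq_of_val a b (by simp [h2])
    subst hxv
    have hm : (insert (vv a b) (Lset a b \ S)).erase (ww a b) ∈
        ({(insert (uu a b) (T ∩ Bset a b)).erase (ww a b),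
        (insert (ww a b) (T ∩ Aset a b)).erase (ww a b),
        (insert (vv a b) (Lset a b \ T)).erase (ww a b)} :
        Multiset (Finset (Fin (a+b+3)))) := by
      rw [← hE']; simp
    rcases mem_triple hm with h' | h' | h'
    · have hvm : vv a b ∈ (insert (uu a b) (T ∩ Bset a b)).erase (ww a b) := h' ▸ (by simp)
      exact vv_not_mem_upart a b (Finset.mem_of_mem_erase hvm)
    · have hvm : vv a b ∈ (insert (ww a b) (T ∩ Aset a b)).erase (ww a b) := h' ▸ (by simp)
      rw [Finset.erase_insert (ww_not_mem_wpartT a b)] at hvm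
      have := ((mem_Aset a b).1 (Finset.mem_inter.1 hvm).2).1
      rw [vv_val] at this; omega
    · rw [Finset.erase_eq_of_notMem (ww_not_mem_vpart a b),
        Finset.erase_eq_of_notMem (ww_not_mem_vpart a b)] at h'
      have := insert_cancel (by simp) (by simp) h'
      exact hST (sdiff_inj_of_sub a b hS hT this)
  · -- x is a leaf : hypercube move
    have hx3 : 3 ≤ (x : ℕ) := by omega
    have hux : uu a b ≠ x := fun h => by
      have := congrArg Fin.val h; rw [uu_val] at this; omega
    have hwx : ww a b ≠ x := fun h => by
      have := congrArg Fin.val h; rw [ww_val] at this; omega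
    obtain ⟨hu, hrest⟩ := eq3_1 hE' (x := uu a b)
      (Finset.mem_erase.2 ⟨hux, by simp⟩)
      (not_mem_erase_of_not_mem (uu_not_mem_wpart a b))
      (not_mem_erase_of_not_mem (uu_not_mem_vpart a b))
    obtain ⟨hw, -⟩ := pick2_mark hrest (x := ww a b)
      (Finset.mem_erase.2 ⟨hwx, by simp⟩)
      (not_mem_erase_of_not_mem (ww_not_mem_vpart a b))
    have hB := insert_erase_cancel hux (uu_not_mem_upartT a b) (uu_not_mem_upartT a b) hu
    have hA := insert_erase_cancel hwx (ww_not_mem_wpartT a b) (ww_not_mem_wpartT a b) hw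
    have h3 : S.erase x = T.erase x := by
      ext y
      simp only [Finset.mem_erase]
      constructor
      · rintro ⟨hy, hyS⟩
        refine ⟨hy, ?_⟩
        have hy3 := (mem_Lset a b).1 (hS hyS)
        by_cases hlt : (y : ℕ) < 3 + a
        · have hym : y ∈ (S ∩ Aset a b).erase x :=
            Finset.mem_erase.2 ⟨hy, Finset.mem_inter.2 ⟨hyS, (mem_Aset a b).2 ⟨hy3, hlt⟩⟩⟩
          rw [hA] at hym
          exact (Finset.mem_inter.1 (Finset.mem_erase.1 hym).2).1
        · have hym : y ∈ (S ∩ Bset a b).erase x :=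
            Finset.mem_erase.2 ⟨hy, Finset.mem_inter.2 ⟨hyS, (mem_Bset a b).2 (by omega)⟩⟩
          rw [hB] at hym
          exact (Finset.mem_inter.1 (Finset.mem_erase.1 hym).2).1
      · rintro ⟨hy, hyT⟩
        refine ⟨hy, ?_⟩
        have hy3 := (mem_Lset a b).1 (hT hyT)
        by_cases hlt : (y : ℕ) < 3 + a
        · have hym : y ∈ (T ∩ Aset a b).erase x :=
            Finset.mem_erase.2 ⟨hy, Finset.mem_inter.2 ⟨hyT, (mem_Aset a b).2 ⟨hy3, hlt⟩⟩⟩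
          rw [← hA] at hym
          exact (Finset.mem_inter.1 (Finset.mem_erase.1 hym).2).1
        · have hym : y ∈ (T ∩ Bset a b).erase x :=
            Finset.mem_erase.2 ⟨hy, Finset.mem_inter.2 ⟨hyT, (mem_Bset a b).2 (by omega)⟩⟩
          rw [← hB] at hym
          exact (Finset.mem_inter.1 (Finset.mem_erase.1 hym).2).1
    exact Or.inl ⟨rfl, Or.inl ⟨x, (mem_Lset a b).2 hx3, symmdiff_of_erase_eq a b hST h3⟩⟩

lemma H_FT {S T : Finset (Fin (a+b+3))} (hS : S ⊆ Lset a b) (hT : T ⊆ Lset a b)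
    (x : Fin (a+b+3))
    (hE : eraseVtx (enc a b false S) x = eraseVtx (enc a b true T) x) :
    (H a b).Adj (false, S) (true, T) := by
  refine ⟨by simp, hS, hT, Or.inr ⟨by simp, ?_⟩⟩
  have hE' : ({({uu a b, ww a b} : Finset (Fin (a+b+3))).erase x,
      (insert (vv a b) (Lset a b \ S)).erase x, S.erase x} : Multiset (Finset (Fin (a+b+3)))) =
      {(insert (uu a b) (T ∩ Bset a b)).erase x, (insert (ww a b) (T ∩ Aset a b)).erase x,
      (insert (vv a b) (Lset a b \ T)).erase x} := by
    have h0 : eraseVtx ({({uu a b, ww a b} : Finset (Fin (a+b+3))),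
        insert (vv a b) (Lset a b \ S), S} : Multiset (Finset (Fin (a+b+3)))) x =
        eraseVtx ({insert (uu a b) (T ∩ Bset a b), insert (ww a b) (T ∩ Aset a b),
        insert (vv a b) (Lset a b \ T)} : Multiset (Finset (Fin (a+b+3)))) x := hE
    rwa [eraseVtx_triple, eraseVtx_triple] at h0
  by_cases h0 : (x : ℕ) = 0
  · -- x = u : S = T and T ⊆ B
    have hxv : x = uu a b := eq_of_val a b (by simp [h0])
    subst hxv
    have hSTeq : S = T := by
      have hm : (insert (vv a b) (Lset a b \ S)).erase (uu a b) ∈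
          ({(insert (uu a b) (T ∩ Bset a b)).erase (uu a b),
          (insert (ww a b) (T ∩ Aset a b)).erase (uu a b),
          (insert (vv a b) (Lset a b \ T)).erase (uu a b)} :
          Multiset (Finset (Fin (a+b+3)))) := by
        rw [← hE']; simp
      rcases mem_triple hm with h' | h' | h'
      · exact absurd (Finset.mem_of_mem_erase (h' ▸ (by simp : vv a b ∈
          (insert (vv a b) (Lset a b \ S)).erase (uu a b)))) (vv_not_mem_upart a b)
      · exact absurd (Finset.mem_of_mem_erase (h' ▸ (by simp : vv a b ∈
          (insert (vv a b) (Lset a b \ S)).erase (uu a b)))) (vv_not_mem_wpart a b)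
      · rw [Finset.erase_eq_of_notMem (uu_not_mem_vpart a b),
          Finset.erase_eq_of_notMem (uu_not_mem_vpart a b)] at h'
        exact sdiff_inj_of_sub a b hS hT (insert_cancel (by simp) (by simp) h')
    have hTA : T ∩ Aset a b = ∅ := by
      have hm : (insert (ww a b) (T ∩ Aset a b)).erase (uu a b) ∈
          ({({uu a b, ww a b} : Finset (Fin (a+b+3))).erase (uu a b),
          (insert (vv a b) (Lset a b \ S)).erase (uu a b), S.erase (uu a b)} :
          Multiset (Finset (Fin (a+b+3)))) := by
        rw [hE']; simp
      have hwm : ww a b ∈ (insert (ww a b) (T ∩ Aset a b)).erase (uu a b) :=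
        Finset.mem_erase.2 ⟨fun h => by
          have := congrArg Fin.val h; rw [ww_val, uu_val] at this; omega, by simp⟩
      rcases mem_triple hm with h' | h' | h'
      · rw [Finset.erase_eq_of_notMem (uu_not_mem_wpart a b), pair_erase_u] at h'
        ext y
        simp only [Finset.notMem_empty, iff_false]
        intro hy
        have hym : y ∈ ({ww a b} : Finset (Fin (a+b+3))) := h' ▸ (Finset.mem_insert_of_mem hy)
        have := ((mem_Aset a b).1 (Finset.mem_inter.1 hy).2).1
        rw [Finset.mem_singleton, eq_ww_iff] at hym
        omega
      · rw [h'] at hwm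
        exact absurd (Finset.mem_of_mem_erase hwm) (ww_not_mem_vpart a b)
      · rw [h'] at hwm
        have := (mem_Lset a b).1 (hS (Finset.mem_of_mem_erase hwm))
        rw [ww_val] at this; omega
    refine ⟨hSTeq, Or.inr ?_⟩
    rw [hSTeq]
    intro y hy
    have hy3 := (mem_Lset a b).1 (hT hy)
    by_cases hlt : (y : ℕ) < 3 + a
    · exact absurd (Finset.mem_inter.2 ⟨hy, (mem_Aset a b).2 ⟨hy3, hlt⟩⟩)
        (by rw [hTA]; simp)
    · exact (mem_Bset a b).2 (by omega)
  by_cases h2 : (x : ℕ) = 2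
  · -- x = w : S = T and T ⊆ A
    have hxv : x = ww a b := eq_of_val a b (by simp [h2])
    subst hxv
    have hSTeq : S = T := by
      have hm : (insert (vv a b) (Lset a b \ S)).erase (ww a b) ∈
          ({(insert (uu a b) (T ∩ Bset a b)).erase (ww a b),
          (insert (ww a b) (T ∩ Aset a b)).erase (ww a b),
          (insert (vv a b) (Lset a b \ T)).erase (ww a b)} :
          Multiset (Finset (Fin (a+b+3)))) := by
        rw [← hE']; simp
      rcases mem_triple hm with h' | h' | h'
      · exact absurd (Finset.mem_of_mem_erase (h' ▸ (by simp : vv a b ∈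
          (insert (vv a b) (Lset a b \ S)).erase (ww a b)))) (vv_not_mem_upart a b)
      · have hvm : vv a b ∈ (insert (ww a b) (T ∩ Aset a b)).erase (ww a b) := h' ▸ (by simp)
        rw [Finset.erase_insert (ww_not_mem_wpartT a b)] at hvm
        have := ((mem_Aset a b).1 (Finset.mem_inter.1 hvm).2).1
        rw [vv_val] at this; omega
      · rw [Finset.erase_eq_of_notMem (ww_not_mem_vpart a b),
          Finset.erase_eq_of_notMem (ww_not_mem_vpart a b)] at h'
        exact sdiff_inj_of_sub a b hS hT (insert_cancel (by simp) (by simp) h')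
    have hTB : T ∩ Bset a b = ∅ := by
      have hm : (insert (uu a b) (T ∩ Bset a b)).erase (ww a b) ∈
          ({({uu a b, ww a b} : Finset (Fin (a+b+3))).erase (ww a b),
          (insert (vv a b) (Lset a b \ S)).erase (ww a b), S.erase (ww a b)} :
          Multiset (Finset (Fin (a+b+3)))) := by
        rw [hE']; simp
      have hum : uu a b ∈ (insert (uu a b) (T ∩ Bset a b)).erase (ww a b) :=
        Finset.mem_erase.2 ⟨fun h => by
          have := congrArg Fin.val h; rw [ww_val, uu_val] at this; omega, by simp⟩
      rcases mem_triple hm with h' | h' | h'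
      · rw [Finset.erase_eq_of_notMem (ww_not_mem_upart a b), pair_erase_w] at h'
        ext y
        simp only [Finset.notMem_empty, iff_false]
        intro hy
        have hym : y ∈ ({uu a b} : Finset (Fin (a+b+3))) := h' ▸ (Finset.mem_insert_of_mem hy)
        have := (mem_Bset a b).1 (Finset.mem_inter.1 hy).2
        rw [Finset.mem_singleton, eq_uu_iff] at hym
        omega
      · rw [h'] at hum
        exact absurd (Finset.mem_of_mem_erase hum) (uu_not_mem_vpart a b)
      · rw [h'] at hum
        have := (mem_Lset a b).1 (hS (Finset.mem_of_mem_erase hum))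
        rw [uu_val] at this; omega
    refine ⟨hSTeq, Or.inl ?_⟩
    rw [hSTeq]
    intro y hy
    have hy3 := (mem_Lset a b).1 (hT hy)
    by_cases hlt : (y : ℕ) < 3 + a
    · exact (mem_Aset a b).2 ⟨hy3, hlt⟩
    · exact absurd (Finset.mem_inter.2 ⟨hy, (mem_Bset a b).2 (by omega)⟩)
        (by rw [hTB]; simp)
  · -- x = v or a leaf : impossible
    exfalso
    have hnu : x ≠ uu a b := fun h => h0 (by rw [h]; simp)
    have hnw : x ≠ ww a b := fun h => h2 (by rw [h]; simp)
    have hm : ({uu a b, ww a b} : Finset (Fin (a+b+3))).erase x ∈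
        ({(insert (uu a b) (T ∩ Bset a b)).erase x, (insert (ww a b) (T ∩ Aset a b)).erase x,
        (insert (vv a b) (Lset a b \ T)).erase x} : Multiset (Finset (Fin (a+b+3)))) := by
      rw [← hE']; simp
    have hpair : ({uu a b, ww a b} : Finset (Fin (a+b+3))).erase x = {uu a b, ww a b} := by
      apply Finset.erase_eq_of_notMem
      simp only [Finset.mem_insert, Finset.mem_singleton]
      rintro (h | h)
      · exact hnu h
      · exact hnw h
    rw [hpair] at hm
    have hum : uu a b ∈ ({uu a b, ww a b} : Finset (Fin (a+b+3))) := by simp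
    have hwm : ww a b ∈ ({uu a b, ww a b} : Finset (Fin (a+b+3))) := by simp
    rcases mem_triple hm with h' | h' | h'
    · rw [h'] at hwm
      exact ww_not_mem_upart a b (Finset.mem_of_mem_erase hwm)
    · rw [h'] at hum
      exact uu_not_mem_wpart a b (Finset.mem_of_mem_erase hum)
    · rw [h'] at hum
      exact uu_not_mem_vpart a b (Finset.mem_of_mem_erase hum)

lemma H_of_erase {c c' : Bool} {S T : Finset (Fin (a+b+3))}
    (hS : S ⊆ Lset a b) (hT : T ⊆ Lset a b)
    (hne : ((c, S) : Bool × Finset (Fin (a+b+3))) ≠ (c', T)) {x : Fin (a+b+3)}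
    (hE : eraseVtx (enc a b c S) x = eraseVtx (enc a b c' T) x) :
    (H a b).Adj (c, S) (c', T) := by
  cases c <;> cases c'
  · exact H_FF a b hS hT (fun h => hne (by rw [h])) x hE
  · exact H_FT a b hS hT x hE
  · exact (H a b).adj_symm (H_FT a b hT hS x hE.symm)
  · exact H_TT a b hS hT (fun h => hne (by rw [h])) x hE

/-! ### Counting the edges of H -/

lemma S_ne_symmDiff {S : Finset (Fin (a+b+3))} {ℓ : Fin (a+b+3)} :
    S ≠ symmDiff S {ℓ} := by
  intro h
  have h1 : (ℓ ∈ symmDiff S {ℓ}) ↔ (ℓ ∉ S) := by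
    simp [Finset.mem_symmDiff]
  rw [← h] at h1
  tauto

lemma symmDiff_subset_L {S : Finset (Fin (a+b+3))} {ℓ : Fin (a+b+3)}
    (hS : S ⊆ Lset a b) (hℓ : ℓ ∈ Lset a b) : symmDiff S {ℓ} ⊆ Lset a b := by
  intro y hy
  rcases Finset.mem_symmDiff.1 hy with ⟨h1, -⟩ | ⟨h1, -⟩
  · exact hS h1
  · rw [Finset.mem_singleton] at h1
    exact h1 ▸ hℓ

lemma symmDiff_sdiff_self {S : Finset (Fin (a+b+3))} (hS : S ⊆ Lset a b) :
    symmDiff S (Lset a b \ S) = Lset a b := by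
  ext y
  simp only [Finset.mem_symmDiff, Finset.mem_sdiff]
  constructor
  · rintro (⟨h1, -⟩ | ⟨⟨h1, -⟩, -⟩)
    · exact hS h1
    · exact h1
  · intro hy
    by_cases hyS : y ∈ S
    · exact Or.inl ⟨hyS, fun h => h.2 hyS⟩
    · exact Or.inr ⟨⟨hy, hyS⟩, hyS⟩

lemma S_ne_compl {S : Finset (Fin (a+b+3))} (hab2 : 2 ≤ a + b) :
    S ≠ Lset a b \ S := by
  intro h
  have hne : (Lset a b).Nonempty := by
    rw [← Finset.card_pos, card_Lset]; omega
  obtain ⟨y, hy⟩ := hne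
  by_cases hyS : y ∈ S
  · have h2 := hyS
    rw [h] at h2
    exact (Finset.mem_sdiff.1 h2).2 hyS
  · have h2 : y ∈ Lset a b \ S := Finset.mem_sdiff.2 ⟨hy, hyS⟩
    rw [← h] at h2
    exact hyS h2

lemma symmDiff_inj {S : Finset (Fin (a+b+3))} :
    Function.Injective (fun ℓ : Fin (a+b+3) => symmDiff S {ℓ}) := by
  intro ℓ ℓ' h
  simp only at h
  have := congrArg (fun X => symmDiff S X) h
  simp only [symmDiff_symmDiff_cancel_left] at this
  exact Finset.singleton_injective this

lemma bool_ne_not (c : Bool) : c ≠ !c := by cases c <;> simp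

lemma H_neighborFinset {c : Bool} {S : Finset (Fin (a+b+3))}
    (hS : S ⊆ Lset a b) (hab2 : 2 ≤ a + b) :
    (H a b).neighborFinset (c, S) =
      ((Lset a b).image fun ℓ => (c, symmDiff S {ℓ})) ∪
      ((if c = false then ({((false : Bool), Lset a b \ S)} :
          Finset (Bool × Finset (Fin (a+b+3)))) else ∅) ∪
      (if S ⊆ Aset a b ∨ S ⊆ Bset a b then ({((!c : Bool), S)} :
          Finset (Bool × Finset (Fin (a+b+3)))) else ∅)) := by
  ext y
  obtain ⟨c', T⟩ := y
  simp only [SimpleGraph.mem_neighborFinset, Finset.mem_union, Finset.mem_image]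
  constructor
  · rintro ⟨hne, -, hT, hcase⟩
    rcases hcase with ⟨hcc, hcube | hswap⟩ | ⟨hcc, hST, hAB⟩
    · obtain ⟨ℓ, hℓ, hTS⟩ := hcube
      simp only at hcc hTS
      exact Or.inl ⟨ℓ, hℓ, by rw [hcc, hTS]⟩
    · obtain ⟨hcf, hTS⟩ := hswap
      simp only at hcc hcf hTS
      refine Or.inr (Or.inl ?_)
      rw [if_pos hcf]
      exact Finset.mem_singleton.2 (by rw [← hcc, hcf, hTS])
    · simp only at hcc hST hAB
      refine Or.inr (Or.inr ?_)
      rw [if_pos hAB]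
      have hc' : c' = !c := by cases c <;> cases c' <;> simp_all
      exact Finset.mem_singleton.2 (by rw [hc', ← hST])
  · rintro (⟨ℓ, hℓ, heq⟩ | h | h)
    · injection heq with h1 h2
      subst h1; subst h2
      exact ⟨fun h => S_ne_symmDiff a b (congrArg Prod.snd h), hS,
        symmDiff_subset_L a b hS hℓ, Or.inl ⟨rfl, Or.inl ⟨ℓ, hℓ, rfl⟩⟩⟩
    · split_ifs at h with hc
      · rw [Finset.mem_singleton] at h
        injection h with h1 h2
        subst h1; subst h2; subst hc
        exact ⟨fun hcon => S_ne_compl a b hab2 (congrArg Prod.snd hcon), hS,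
          Finset.sdiff_subset, Or.inl ⟨rfl, Or.inr ⟨rfl, rfl⟩⟩⟩
      · exact absurd h (Finset.notMem_empty _)
    · split_ifs at h with hc
      · rw [Finset.mem_singleton] at h
        injection h with h1 h2
        subst h1; subst h2
        exact ⟨fun hcon => bool_ne_not c (congrArg Prod.fst hcon), hS, hS,
          Or.inr ⟨bool_ne_not c, rfl, hc⟩⟩
      · exact absurd h (Finset.notMem_empty _)

lemma H_degree {c : Bool} {S : Finset (Fin (a+b+3))} (hab2 : 2 ≤ a + b) :
    (H a b).degree (c, S) = if S ⊆ Lset a b then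
      ((a + b) + ((if c = false then 1 else 0) +
        (if S ⊆ Aset a b ∨ S ⊆ Bset a b then 1 else 0))) else 0 := by
  by_cases hS : S ⊆ Lset a b
  · rw [if_pos hS]
    show ((H a b).neighborFinset (c, S)).card = _
    rw [H_neighborFinset a b hS hab2]
    have hdisj2 : Disjoint (if c = false then ({((false : Bool), Lset a b \ S)} :
        Finset (Bool × Finset (Fin (a+b+3)))) else ∅)
        (if S ⊆ Aset a b ∨ S ⊆ Bset a b then ({((!c : Bool), S)} :
        Finset (Bool × Finset (Fin (a+b+3)))) else ∅) := by
      split_ifs with h1 h2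
      · rw [Finset.disjoint_singleton]
        intro h
        injection h with hc1 hc2
        rw [h1] at hc1
        simp at hc1
      · simp
      · simp
      · simp
    have hdisj1 : Disjoint ((Lset a b).image fun ℓ => (c, symmDiff S {ℓ}))
        ((if c = false then ({((false : Bool), Lset a b \ S)} :
          Finset (Bool × Finset (Fin (a+b+3)))) else ∅) ∪
        (if S ⊆ Aset a b ∨ S ⊆ Bset a b then ({((!c : Bool), S)} :
          Finset (Bool × Finset (Fin (a+b+3)))) else ∅)) := by
      rw [Finset.disjoint_left]
      intro x hx hx'
      obtain ⟨ℓ, hℓ, rfl⟩ := Finset.mem_image.1 hx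
      rcases Finset.mem_union.1 hx' with h | h
      · split_ifs at h with hc
        · rw [Finset.mem_singleton] at h
          injection h with h1 h2
          have hcontra := congrArg (fun X => symmDiff S X) h2
          simp only [symmDiff_symmDiff_cancel_left, symmDiff_sdiff_self a b hS] at hcontra
          have := congrArg Finset.card hcontra
          rw [Finset.card_singleton, card_Lset] at this
          omega
        · exact absurd h (Finset.notMem_empty _)
      · split_ifs at h with hc
        · rw [Finset.mem_singleton] at h
          injection h with h1 h2
          exact bool_ne_not c h1
        · exact absurd h (Finset.notMem_empty _)
    rw [Finset.card_union_of_disjoint hdisj1, Finset.card_union_of_disjoint hdisj2,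
      Finset.card_image_of_injective _
        (fun ℓ ℓ' h => symmDiff_inj a b (congrArg Prod.snd h)),
      card_Lset, apply_ite Finset.card, apply_ite Finset.card,
      Finset.card_singleton, Finset.card_singleton, Finset.card_empty]
  · rw [if_neg hS]
    show ((H a b).neighborFinset (c, S)).card = 0
    rw [Finset.card_eq_zero]
    ext y
    simp only [SimpleGraph.mem_neighborFinset, Finset.notMem_empty, iff_false]
    rintro ⟨-, hS', -⟩
    exact hS hS'

lemma card_filterAB :
    ((Lset a b).powerset.filter (fun S => S ⊆ Aset a b ∨ S ⊆ Bset a b)).card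
      = 2 ^ a + 2 ^ b - 1 := by
  have hfil : (Lset a b).powerset.filter (fun S => S ⊆ Aset a b ∨ S ⊆ Bset a b)
      = (Aset a b).powerset ∪ (Bset a b).powerset := by
    ext S
    simp only [Finset.mem_filter, Finset.mem_powerset, Finset.mem_union]
    constructor
    · rintro ⟨-, h⟩; exact h
    · rintro (h | h)
      · exact ⟨h.trans (Aset_subset_Lset a b), Or.inl h⟩
      · exact ⟨h.trans (Bset_subset_Lset a b), Or.inr h⟩
  have hint : (Aset a b).powerset ∩ (Bset a b).powerset = {∅} := by
    ext S
    simp only [Finset.mem_inter, Finset.mem_powerset, Finset.mem_singleton]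
    constructor
    · rintro ⟨h1, h2⟩
      have hsub : S ⊆ Aset a b ∩ Bset a b := Finset.subset_inter h1 h2
      have hAB : Aset a b ∩ Bset a b = ∅ := by
        ext y
        simp only [Finset.mem_inter, mem_Aset, mem_Bset, Finset.notMem_empty, iff_false]
        omega
      rw [hAB] at hsub
      exact Finset.subset_empty.1 hsub
    · rintro rfl
      exact ⟨Finset.empty_subset _, Finset.empty_subset _⟩
  have hcards := Finset.card_union_add_card_inter (Aset a b).powerset (Bset a b).powerset
  rw [hint, Finset.card_powerset, Finset.card_powerset, card_Aset, card_Bset,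
    Finset.card_singleton] at hcards
  rw [hfil]
  have h1 : 1 ≤ 2 ^ a := Nat.one_le_two_pow
  omega

lemma H_edge_count (hb : 1 ≤ b) (hab : b ≤ a) :
    (H a b).edgeFinset.card = (2 * (a + b) + 1) * 2 ^ (a + b - 1) + (2 ^ a + 2 ^ b - 1) := by
  have hab2 : 2 ≤ a + b := by omega
  have hsum := SimpleGraph.sum_degrees_eq_twice_card_edges (H a b)
  rw [Fintype.sum_prod_type] at hsum
  have hone : ∀ c : Bool, (∑ S : Finset (Fin (a+b+3)), (H a b).degree (c, S)) =
      2 ^ (a+b) * (a + b) + ((if c = false then 2 ^ (a+b) else 0) +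
        (2 ^ a + 2 ^ b - 1)) := by
    intro c
    rw [← Finset.sum_subset (Finset.subset_univ ((Lset a b).powerset))
      (fun S _ hS => by
        rw [H_degree a b hab2, if_neg (fun hsub => hS (Finset.mem_powerset.2 hsub))])]
    rw [Finset.sum_congr rfl (fun S hS => by
      rw [H_degree a b hab2, if_pos (Finset.mem_powerset.1 hS)])]
    have hsplit : (∑ S ∈ (Lset a b).powerset, ((a + b) + ((if c = false then 1 else 0) +
        (if S ⊆ Aset a b ∨ S ⊆ Bset a b then 1 else 0)))) =
        (∑ _S ∈ (Lset a b).powerset, (a + b)) +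
        ((∑ _S ∈ (Lset a b).powerset, (if c = false then 1 else 0)) +
        (∑ S ∈ (Lset a b).powerset, (if S ⊆ Aset a b ∨ S ⊆ Bset a b then 1 else 0))) := by
      rw [← Finset.sum_add_distrib, ← Finset.sum_add_distrib]
    rw [hsplit, Finset.sum_const, Finset.sum_const, Finset.card_powerset, card_Lset,
      smul_eq_mul, smul_eq_mul, mul_ite, mul_one, mul_zero]
    have hboole := Finset.sum_boole (fun S => S ⊆ Aset a b ∨ S ⊆ Bset a b)
      ((Lset a b).powerset) (R := ℕ)
    rw [Nat.cast_id] at hboole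
    rw [hboole, card_filterAB a b]
  have honeT := hone true
  have honeF := hone false
  rw [if_neg (show ¬((true : Bool) = false) by simp)] at honeT
  rw [if_pos rfl] at honeF
  rw [Fintype.sum_bool, honeT, honeF] at hsum
  have hpow : 2 ^ (a+b) = 2 * 2 ^ (a+b-1) := by
    conv_lhs => rw [show a + b = (a+b-1)+1 by omega]
    rw [pow_succ]
    ring
  rw [hpow] at hsum
  have hexp : 2 * 2 ^ (a+b-1) * (a + b) + ((0 : ℕ) + (2 ^ a + 2 ^ b - 1)) +
      (2 * 2 ^ (a+b-1) * (a + b) + (2 * 2 ^ (a+b-1) + (2 ^ a + 2 ^ b - 1))) =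
      2 * ((2 * (a + b) + 1) * 2 ^ (a+b-1) + (2 ^ a + 2 ^ b - 1)) := by
    ring_nf
  rw [hexp] at hsum
  omega

/-! ### Transferring the count -/

/-- The encoding as a map into stable partitions. -/
noncomputable def encP : Bool × Finset (Fin (a+b+3)) →
    {P : Multiset (Finset (Fin (a+b+3))) // IsStablePartition (doubleBroom a b) 3 P} :=
  fun x => if h : x.2 ⊆ Lset a b then ⟨enc a b x.1 x.2, enc_stable a b h⟩
    else ⟨enc a b false ∅, enc_stable a b (Finset.empty_subset _)⟩

lemma encP_good {c : Bool} {S : Finset (Fin (a+b+3))} (h : S ⊆ Lset a b) :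
    (encP a b (c, S)).1 = enc a b c S := by
  unfold encP
  rw [dif_pos h]

lemma encP_inj {x y : Bool × Finset (Fin (a+b+3))} (hx : x.2 ⊆ Lset a b)
    (hy : y.2 ⊆ Lset a b) (h : encP a b x = encP a b y) : x = y := by
  obtain ⟨c, S⟩ := x
  obtain ⟨c', T⟩ := y
  have hval : enc a b c S = enc a b c' T := by
    rw [← encP_good a b hx, ← encP_good a b hy, h]
  obtain ⟨h1, h2⟩ := enc_inj a b hx hy hval
  rw [h1, show S = T from h2]

lemma bij_edges : Set.BijOn (Sym2.map (encP a b)) ((H a b).edgeSet)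
    ((bellGraph (doubleBroom a b) 3).edgeSet) := by
  refine ⟨?_, ?_, ?_⟩
  · intro e he
    induction e using Sym2.ind with
    | _ x y =>
      obtain ⟨c, S⟩ := x
      obtain ⟨c', T⟩ := y
      rw [SimpleGraph.mem_edgeSet] at he
      have hS := he.2.1
      have hT := he.2.2.1
      rw [Sym2.map_pair_eq, SimpleGraph.mem_edgeSet]
      refine ⟨?_, ?_⟩
      · intro h
        exact he.1 (encP_inj a b hS hT h)
      · obtain ⟨x₀, hx₀⟩ := erase_of_H a b he
        exact ⟨x₀, by rw [encP_good a b hS, encP_good a b hT]; exact hx₀⟩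
  · intro e1 he1 e2 he2 h12
    induction e1 using Sym2.ind with
    | _ x y =>
      induction e2 using Sym2.ind with
      | _ z w =>
        rw [SimpleGraph.mem_edgeSet] at he1 he2
        have hx := he1.2.1
        have hy := he1.2.2.1
        have hz := he2.2.1
        have hw := he2.2.2.1
        rw [Sym2.map_pair_eq, Sym2.map_pair_eq, Sym2.eq_iff] at h12
        rcases h12 with ⟨h1, h2⟩ | ⟨h1, h2⟩
        · rw [Sym2.eq_iff]
          exact Or.inl ⟨encP_inj a b hx hz h1, encP_inj a b hy hw h2⟩
        · rw [Sym2.eq_iff]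
          exact Or.inr ⟨encP_inj a b hx hw h1, encP_inj a b hy hz h2⟩
  · intro e he
    induction e using Sym2.ind with
    | _ P Q =>
      rw [SimpleGraph.mem_edgeSet] at he
      obtain ⟨hPQ, x₀, hx₀⟩ := he
      obtain ⟨c, S, hSsub, hPS⟩ := classify a b P.2
      obtain ⟨c', T, hTsub, hQT⟩ := classify a b Q.2
      have hne : ((c, S) : Bool × Finset (Fin (a+b+3))) ≠ (c', T) := by
        intro h
        injection h with h1 h2
        apply hPQ
        apply Subtype.ext
        rw [hPS, hQT, h1, h2]
      have hadj := H_of_erase a b hSsub hTsub hne (x := x₀)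
        (by rw [← hPS, ← hQT]; exact hx₀)
      refine ⟨s((c, S), (c', T)), ((H a b).mem_edgeSet).2 hadj, ?_⟩
      rw [Sym2.map_pair_eq]
      rw [show encP a b (c, S) = P from Subtype.ext (by rw [encP_good a b hSsub, ← hPS]),
        show encP a b (c', T) = Q from Subtype.ext (by rw [encP_good a b hTsub, ← hQT])]

end DB

/-- **Edge count for double brooms.** For `a ≥ b ≥ 1`, the Bell `3`-coloring
graph of the double broom `B(3, a, b)` has exactly
`(2(a + b) + 1)·2^{a+b−1} + 2^a + 2^b − 1` edges. -/
theorem doubleBroom_bell3_edge_count (a b : ℕ) (hb : 1 ≤ b) (hab : b ≤ a) :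
    ((bellGraph (doubleBroom a b) 3).edgeSet).Finite ∧
      ((bellGraph (doubleBroom a b) 3).edgeSet).ncard =
        (2 * (a + b) + 1) * 2 ^ (a + b - 1) + 2 ^ a + 2 ^ b - 1 := by
  have hbij := DB.bij_edges a b
  have himg := hbij.image_eq
  constructor
  · rw [← himg]
    exact (Set.toFinite _).image _
  · rw [← himg, Set.ncard_image_of_injOn hbij.injOn]
    have h1 : ((DB.H a b).edgeSet).ncard = (DB.H a b).edgeFinset.card := by
      rw [← SimpleGraph.coe_edgeFinset, Set.ncard_coe_finset]
    rw [h1, DB.H_edge_count a b hb hab]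
    have h2 : 1 ≤ 2 ^ a := Nat.one_le_two_pow
    have h3 : 1 ≤ 2 ^ b := Nat.one_le_two_pow
    omega
end

section
/- Let G be a finite simple graph of order n with vertex set {v_1, …, v_n}, let Q = {{v_1}, …, {v_n}} be the singleton stable n-partition, and let N(Q) be the neighborhood of Q in B_n(G). Then the subgraph of B_n(G) induced on N(Q) is isomorphic to the line graph L(Ḡ) of the complement of G. -/
open SimpleGraph

variable {V : Type*} [Fintype V] [DecidableEq V]

/-! ### Auxiliary definitions and lemmas -/

/-- The partition with one empty part, the part `s`, and singletons elsewhere. -/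
def partM (s : Finset V) : Multiset (Finset V) :=
  ∅ ::ₘ s ::ₘ ((Finset.univ \ s).val.map fun v => ({v} : Finset V))

/-- The underlying `Finset` of a `Sym2`. -/
def pairFin : Sym2 V → Finset V :=
  Sym2.lift ⟨fun u v => {u, v}, fun u v => Finset.pair_comm u v⟩

@[simp] lemma pairFin_mk (u v : V) : pairFin s(u, v) = {u, v} := rfl

lemma mem_pairFin {x : V} {e : Sym2 V} : x ∈ pairFin e ↔ x ∈ e := by
  induction e using Sym2.ind with
  | _ a b => simp [pairFin]

lemma pairFin_inj {e f : Sym2 V} (h : pairFin e = pairFin f) : e = f := by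
  induction e using Sym2.ind with
  | _ a b =>
    induction f using Sym2.ind with
    | _ c d =>
      simp only [pairFin_mk] at h
      have ha := Finset.ext_iff.mp h
      simp only [Finset.mem_insert, Finset.mem_singleton] at ha
      rw [Sym2.eq_iff]
      have h1 := (ha a).mp (Or.inl rfl)
      have h2 := (ha b).mp (Or.inr rfl)
      have h3 := (ha c).mpr (Or.inl rfl)
      have h4 := (ha d).mpr (Or.inr rfl)
      rcases h1 with rfl | rfl <;> rcases h2 with rfl | rfl <;> tauto

lemma mem_msum {a : V} {S : Multiset (Multiset V)} : a ∈ S.sum ↔ ∃ s ∈ S, a ∈ s := by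
  induction S using Multiset.induction_on with
  | empty => simp
  | cons b S ih =>
    simp only [Multiset.sum_cons, Multiset.mem_add, ih, Multiset.mem_cons]
    constructor
    · rintro (h | ⟨s, hs, has⟩)
      · exact ⟨b, Or.inl rfl, h⟩
      · exact ⟨s, Or.inr hs, has⟩
    · rintro ⟨s, (rfl | hs), has⟩
      · exact Or.inl has
      · exact Or.inr ⟨s, hs, has⟩

lemma sum_val_partM (s : Finset V) :
    ((partM s).map Finset.val).sum = (Finset.univ : Finset V).val := by
  unfold partM
  rw [Multiset.map_cons, Multiset.map_cons, Multiset.map_map, Multiset.sum_cons,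
    Multiset.sum_cons]
  have h1 : ((Finset.univ \ s).val.map (Finset.val ∘ fun v => ({v} : Finset V))).sum
      = (Finset.univ \ s).val := by
    have : (Finset.val ∘ fun v : V => ({v} : Finset V)) = fun v : V => ({v} : Multiset V) := by
      funext v; rfl
    rw [this, Multiset.sum_map_singleton]
  rw [h1, Finset.sdiff_val]
  have hle : s.val ≤ (Finset.univ : Finset V).val := Finset.val_le_iff.mpr (Finset.subset_univ s)
  simp only [Finset.empty_val, zero_add]
  exact add_tsub_cancel_of_le hle

lemma mem_partM_card {s p : Finset V} (hp : p ∈ partM s) (h2 : 2 ≤ p.card) : p = s := by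
  rcases Multiset.mem_cons.mp hp with rfl | hp
  · simp at h2
  rcases Multiset.mem_cons.mp hp with rfl | hp
  · rfl
  · obtain ⟨w, _, rfl⟩ := Multiset.mem_map.mp hp
    simp at h2

lemma partM_ne_Q (s : Finset V) :
    partM s ≠ (Finset.univ : Finset V).val.map (fun v : V => ({v} : Finset V)) := by
  intro h
  have h0 : (∅ : Finset V) ∈ partM s := Multiset.mem_cons_self _ _
  rw [h] at h0
  obtain ⟨w, _, hw⟩ := Multiset.mem_map.mp h0
  exact Finset.singleton_ne_empty w hw

lemma eraseQ (v : V) :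
    eraseVtx ((Finset.univ : Finset V).val.map (fun v : V => ({v} : Finset V))) v
      = ∅ ::ₘ ((Finset.univ.erase v).val.map fun w => ({w} : Finset V)) := by
  unfold eraseVtx
  rw [Multiset.map_map]
  have huniv : (Finset.univ : Finset V).val = v ::ₘ (Finset.univ.erase v).val := by
    rw [Finset.erase_val]
    exact (Multiset.cons_erase (Finset.mem_univ v : v ∈ Finset.univ)).symm
  rw [huniv, Multiset.map_cons]
  congr 1
  · simp
  · refine Multiset.map_congr rfl fun w hw => ?_
    have : w ≠ v := (Finset.mem_erase.mp (Finset.mem_val.mp hw)).1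
    exact Finset.erase_eq_of_notMem (fun hmem => this (Finset.mem_singleton.mp hmem).symm)

lemma erase_partM {s : Finset V} {v : V} (hv : v ∈ s) (hcard : s.card = 2) :
    eraseVtx (partM s) v
      = ∅ ::ₘ ((Finset.univ.erase v).val.map fun w => ({w} : Finset V)) := by
  obtain ⟨u, hu⟩ : ∃ u, s.erase v = {u} := by
    rw [← Finset.card_eq_one, Finset.card_erase_of_mem hv, hcard]
  have huv : u ≠ v := by
    have : u ∈ s.erase v := hu ▸ Finset.mem_singleton_self u
    exact (Finset.mem_erase.mp this).1
  have hs : s = {v, u} := by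
    rw [← Finset.insert_erase hv, hu]
  have hdiff : (Finset.univ : Finset V) \ s = (Finset.univ.erase v).erase u := by
    ext a
    simp only [Finset.mem_sdiff, Finset.mem_univ, true_and, Finset.mem_erase, hs,
      Finset.mem_insert, Finset.mem_singleton]
    tauto
  unfold eraseVtx partM
  rw [Multiset.map_cons, Multiset.map_cons, hu, Multiset.map_map]
  have h1 : ((Finset.univ \ s).val.map ((fun t : Finset V => t.erase v) ∘ fun w => ({w} : Finset V)))
      = (Finset.univ \ s).val.map fun w => ({w} : Finset V) := by
    refine Multiset.map_congr rfl fun w hw => ?_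
    have hws : w ∉ s := (Finset.mem_sdiff.mp (Finset.mem_val.mp hw)).2
    have : w ≠ v := fun h => hws (h ▸ hv)
    exact Finset.erase_eq_of_notMem (fun hmem => this (Finset.mem_singleton.mp hmem).symm)
  rw [h1, Finset.erase_empty]
  congr 1
  have hmem : u ∈ (Finset.univ.erase v).val := by
    rw [Finset.mem_val, Finset.mem_erase]; exact ⟨huv, Finset.mem_univ u⟩
  have : (Finset.univ.erase v).val = u ::ₘ ((Finset.univ.erase v).erase u).val := by
    rw [Finset.erase_val]
    exact (Multiset.cons_erase hmem).symm
  rw [this, Multiset.map_cons, hdiff]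

lemma not_two_parts {t s : Finset V} {R : Multiset (Finset V)} {v : V}
    (hsum : ((t ::ₘ s ::ₘ R).map Finset.val).sum = (Finset.univ : Finset V).val)
    (hvt : v ∈ t) (hvs : v ∈ s) : False := by
  have hnodup : (Finset.univ : Finset V).val.Nodup := Finset.univ.nodup
  have h1 : Multiset.count v (Finset.univ : Finset V).val ≤ 1 :=
    Multiset.nodup_iff_count_le_one.mp hnodup v
  rw [← hsum] at h1
  rw [Multiset.map_cons, Multiset.map_cons, Multiset.sum_cons, Multiset.sum_cons] at h1
  rw [Multiset.count_add, Multiset.count_add] at h1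
  have h2 : 1 ≤ Multiset.count v t.val := Multiset.one_le_count_iff_mem.mpr (Finset.mem_val.mpr hvt)
  have h3 : 1 ≤ Multiset.count v s.val := Multiset.one_le_count_iff_mem.mpr (Finset.mem_val.mpr hvs)
  omega

/-- Classification of the neighbours of the singleton partition. -/
lemma classify {P : Multiset (Finset V)} {v : V}
    (hsum : (P.map Finset.val).sum = (Finset.univ : Finset V).val)
    (hne : P ≠ (Finset.univ : Finset V).val.map (fun v : V => ({v} : Finset V)))
    (h : eraseVtx P v
      = eraseVtx ((Finset.univ : Finset V).val.map (fun v : V => ({v} : Finset V))) v) :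
    ∃ u : V, u ≠ v ∧ ({u, v} : Finset V) ∈ P ∧ P = partM {u, v} := by
  rw [eraseQ] at h
  set M := ((Finset.univ.erase v).val.map fun w => ({w} : Finset V)) with hM
  have h0 : (∅ : Finset V) ∈ eraseVtx P v := h ▸ Multiset.mem_cons_self _ _
  obtain ⟨t, htP, ht⟩ := Multiset.mem_map.mp h0
  obtain ⟨P₁, rfl⟩ : ∃ P₁, P = t ::ₘ P₁ := ⟨P.erase t, (Multiset.cons_erase htP).symm⟩
  have h₁ : eraseVtx P₁ v = M := by
    unfold eraseVtx at h ⊢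
    rw [Multiset.map_cons, ht] at h
    exact (Multiset.cons_inj_right _).mp h
  by_cases hvt : v ∈ t
  · -- the part containing `v` maps to `∅`, so `P = Q`, contradiction
    exfalso
    have hnov : ∀ s ∈ P₁, v ∉ s := by
      intro s hs hvs
      obtain ⟨R, rfl⟩ : ∃ R, P₁ = s ::ₘ R := ⟨P₁.erase s, (Multiset.cons_erase hs).symm⟩
      exact not_two_parts hsum hvt hvs
    have hP₁ : eraseVtx P₁ v = P₁ := by
      unfold eraseVtx
      rw [Multiset.map_congr rfl fun s hs => Finset.erase_eq_of_notMem (hnov s hs)]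
      exact Multiset.map_id' P₁
    have ht' : t = {v} := by
      ext a
      simp only [Finset.mem_singleton]
      constructor
      · intro ha
        by_contra hav
        have : a ∈ t.erase v := Finset.mem_erase.mpr ⟨hav, ha⟩
        rw [ht] at this; simp at this
      · rintro rfl; exact hvt
    apply hne
    have huniv : (Finset.univ : Finset V).val = v ::ₘ (Finset.univ.erase v).val := by
      rw [Finset.erase_val]
      exact (Multiset.cons_erase (Finset.mem_univ v : v ∈ Finset.univ)).symm
    rw [huniv, Multiset.map_cons, ht', ← hM, ← hP₁, h₁]
  · -- the part containing `v` is a pair `{u, v}`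
    have ht0 : t = ∅ := by
      ext a
      simp only [Finset.notMem_empty, iff_false]
      intro ha
      have hav : a ≠ v := fun h => hvt (h ▸ ha)
      have : a ∈ t.erase v := Finset.mem_erase.mpr ⟨hav, ha⟩
      rw [ht] at this; simp at this
    obtain ⟨sv, hsvP, hvs⟩ : ∃ s ∈ t ::ₘ P₁, v ∈ s := by
      have hv1 : v ∈ (((t ::ₘ P₁).map Finset.val)).sum := by
        rw [hsum]; exact Finset.mem_val.mpr (Finset.mem_univ v)
      obtain ⟨m, hm, hvm⟩ := mem_msum.mp hv1
      obtain ⟨s, hs, rfl⟩ := Multiset.mem_map.mp hm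
      exact ⟨s, hs, Finset.mem_val.mp hvm⟩
    have hsv₁ : sv ∈ P₁ := by
      rcases Multiset.mem_cons.mp hsvP with rfl | hs
      · exact absurd hvs hvt
      · exact hs
    obtain ⟨P₂, rfl⟩ : ∃ P₂, P₁ = sv ::ₘ P₂ := ⟨P₁.erase sv, (Multiset.cons_erase hsv₁).symm⟩
    have hsvM : sv.erase v ∈ M := by
      rw [← h₁]
      exact Multiset.mem_map_of_mem _ (Multiset.mem_cons_self _ _)
    obtain ⟨u, huE, hueq⟩ := Multiset.mem_map.mp hsvM
    have huv : u ≠ v := (Finset.mem_erase.mp (Finset.mem_val.mp huE)).1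
    have hsv : sv = {u, v} := by
      rw [← Finset.insert_erase hvs, ← hueq]
      exact Finset.pair_comm v u
    have hnov : ∀ s ∈ P₂, v ∉ s := by
      intro s hs hvs'
      obtain ⟨R, rfl⟩ : ∃ R, P₂ = s ::ₘ R := ⟨P₂.erase s, (Multiset.cons_erase hs).symm⟩
      have hsum' : ((sv ::ₘ s ::ₘ R).map Finset.val).sum = (Finset.univ : Finset V).val := by
        rw [← hsum, ht0]
        simp [Multiset.sum_cons]
      exact not_two_parts hsum' hvs hvs'
    have hP₂e : eraseVtx P₂ v = P₂ := by
      unfold eraseVtx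
      rw [Multiset.map_congr rfl fun s hs => Finset.erase_eq_of_notMem (hnov s hs)]
      exact Multiset.map_id' P₂
    have hmemu : u ∈ (Finset.univ.erase v).val := huE
    have hMu : M = ({u} : Finset V) ::ₘ (((Finset.univ.erase v).erase u).val.map
        fun w => ({w} : Finset V)) := by
      rw [hM]
      have : (Finset.univ.erase v).val = u ::ₘ ((Finset.univ.erase v).erase u).val := by
        rw [Finset.erase_val]
        exact (Multiset.cons_erase hmemu).symm
      rw [this, Multiset.map_cons]
    have hP₂ : P₂ = ((Finset.univ.erase v).erase u).val.map fun w => ({w} : Finset V) := by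
      have h₁' : sv.erase v ::ₘ eraseVtx P₂ v = M := by
        rw [← h₁]; unfold eraseVtx; rw [Multiset.map_cons]
      rw [hP₂e, ← hueq, hMu] at h₁'
      exact (Multiset.cons_inj_right _).mp h₁'
    have hdiff : (Finset.univ.erase v).erase u = (Finset.univ : Finset V) \ {u, v} := by
      ext a
      simp only [Finset.mem_erase, Finset.mem_univ, and_true, Finset.mem_sdiff, true_and,
        Finset.mem_insert, Finset.mem_singleton]
      tauto
    refine ⟨u, huv, ?_, ?_⟩
    · rw [← hsv]
      exact Multiset.mem_cons_of_mem (Multiset.mem_cons_self _ _)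
    · rw [ht0, hsv, hP₂, hdiff]
      rfl

lemma indep_partM {G : SimpleGraph V} {u v : V} (huv : ¬ G.Adj u v) :
    ∀ s ∈ partM ({u, v} : Finset V), ∀ a ∈ s, ∀ b ∈ s, ¬ G.Adj a b := by
  intro s hs a ha b hb
  rcases Multiset.mem_cons.mp hs with rfl | hs
  · simp at ha
  rcases Multiset.mem_cons.mp hs with rfl | hs
  · simp only [Finset.mem_insert, Finset.mem_singleton] at ha hb
    rcases ha with rfl | rfl <;> rcases hb with rfl | rfl
    · exact fun h => G.irrefl h
    · exact huv
    · exact fun h => huv h.symm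
    · exact fun h => G.irrefl h
  · obtain ⟨w, _, rfl⟩ := Multiset.mem_map.mp hs
    simp only [Finset.mem_singleton] at ha hb
    subst ha; subst hb
    exact fun h => G.irrefl h

lemma stable_partM {G : SimpleGraph V} {s : Finset V} (hcard : s.card = 2)
    (hind : ∀ a ∈ s, ∀ b ∈ s, ¬ G.Adj a b) :
    IsStablePartition G (Fintype.card V) (partM s) := by
  refine ⟨?_, sum_val_partM s, ?_⟩
  · unfold partM
    rw [Multiset.card_cons, Multiset.card_cons, Multiset.card_map]
    have h1 : ((Finset.univ : Finset V) \ s).card = Fintype.card V - 2 := by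
      rw [Finset.card_sdiff_of_subset (Finset.subset_univ s), hcard, Finset.card_univ]
    have h2 : 2 ≤ Fintype.card V := by
      rw [← hcard, ← Finset.card_univ]
      exact Finset.card_le_card (Finset.subset_univ s)
    have h3 : Multiset.card (Finset.univ \ s).val = ((Finset.univ : Finset V) \ s).card := rfl
    rw [h3, h1]
    omega
  · intro p hp a ha b hb
    rcases Multiset.mem_cons.mp hp with rfl | hp
    · simp at ha
    rcases Multiset.mem_cons.mp hp with rfl | hp
    · exact hind a ha b hb
    · obtain ⟨w, _, rfl⟩ := Multiset.mem_map.mp hp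
      simp only [Finset.mem_singleton] at ha hb
      subst ha; subst hb
      exact fun h => G.irrefl h

lemma shared_of_erase_eq {s t : Finset V} (hs : s.card = 2) (ht : t.card = 2) (hne : s ≠ t)
    {w : V} (h : eraseVtx (partM s) w = eraseVtx (partM t) w) : w ∈ s ∧ w ∈ t := by
  have key : ∀ {a b : Finset V}, a.card = 2 → b.card = 2 →
      eraseVtx (partM a) w = eraseVtx (partM b) w → w ∉ a → a = b := by
    intro a b hac hbc heq hwa
    have haa : a.erase w = a := Finset.erase_eq_of_notMem hwa
    have hmem : a ∈ eraseVtx (partM b) w := by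
      rw [← heq]
      unfold eraseVtx
      have : a ∈ partM a := Multiset.mem_cons_of_mem (Multiset.mem_cons_self _ _)
      exact Multiset.mem_map.mpr ⟨a, this, haa⟩
    obtain ⟨p, hp, hpe⟩ := Multiset.mem_map.mp hmem
    have hp2 : 2 ≤ p.card := by
      have hle : (p.erase w).card ≤ p.card := Finset.card_erase_le
      have : (p.erase w).card = 2 := by rw [hpe, hac]
      omega
    have hpb : p = b := mem_partM_card hp hp2
    subst hpb
    have hsub : a ⊆ p := hpe ▸ Finset.erase_subset w p
    exact Finset.eq_of_subset_of_card_le hsub (by omega)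
  constructor
  · by_contra hws
    exact hne (key hs ht h hws)
  · by_contra hwt
    exact hne (key ht hs h.symm hwt).symm

/-- **The neighborhood of the singleton partition is a line graph.** Let `G`
have order `n` and let `Q` be the singleton stable `n`-partition (every part a
singleton).  Then the subgraph of `B_n(G)` induced on the neighborhood of `Q`
is isomorphic to the line graph `L(Ḡ)` of the complement of `G`. -/
theorem neighborhood_of_singleton_is_lineGraph (G : SimpleGraph V) (n : ℕ)
    (hn : Fintype.card V = n)
    (Q : {P : Multiset (Finset V) // IsStablePartition G n P})
    (hQ : Q.1 = (Finset.univ : Finset V).val.map (fun v : V => ({v} : Finset V))) :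
    Nonempty ((bellGraph G n).induce ((bellGraph G n).neighborSet Q) ≃g
      (Gᶜ).lineGraph) := by
  classical
  subst hn
  have ecard : ∀ e : Sym2 V, e ∈ (Gᶜ).edgeSet → (pairFin e).card = 2 := by
    intro e he
    induction e using Sym2.ind with
    | _ a b =>
      have he' : (Gᶜ).Adj a b := he
      rw [compl_adj] at he'
      rw [pairFin_mk]
      exact Finset.card_pair he'.1
  have eind : ∀ e : Sym2 V, e ∈ (Gᶜ).edgeSet →
      ∀ a ∈ pairFin e, ∀ b ∈ pairFin e, ¬ G.Adj a b := by
    intro e he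
    induction e using Sym2.ind with
    | _ u v =>
      have he' : (Gᶜ).Adj u v := he
      rw [compl_adj] at he'
      intro a ha b hb
      rw [pairFin_mk, Finset.mem_insert, Finset.mem_singleton] at ha hb
      rcases ha with rfl | rfl <;> rcases hb with rfl | rfl
      · exact fun h => G.irrefl h
      · exact he'.2
      · exact fun h => he'.2 h.symm
      · exact fun h => G.irrefl h
  have hstab : ∀ e : (Gᶜ).edgeSet, IsStablePartition G (Fintype.card V) (partM (pairFin e.1)) :=
    fun e => stable_partM (ecard e.1 e.2) (eind e.1 e.2)
  have hadjQ : ∀ e : (Gᶜ).edgeSet,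
      (bellGraph G (Fintype.card V)).Adj Q ⟨partM (pairFin e.1), hstab e⟩ := by
    intro e
    constructor
    · intro hEq
      have h1 : Q.1 = partM (pairFin e.1) := congrArg Subtype.val hEq
      rw [hQ] at h1
      exact partM_ne_Q _ h1.symm
    · obtain ⟨w, hw⟩ := Finset.card_pos.mp (by rw [ecard e.1 e.2]; norm_num)
      exact ⟨w, by rw [hQ, eraseQ, erase_partM hw (ecard e.1 e.2)]⟩
  set f : (Gᶜ).edgeSet → ((bellGraph G (Fintype.card V)).neighborSet Q) :=
    fun e => ⟨⟨partM (pairFin e.1), hstab e⟩, hadjQ e⟩ with hf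
  have pmem : ∀ s : Finset V, s ∈ partM s :=
    fun s => Multiset.mem_cons_of_mem (Multiset.mem_cons_self _ _)
  have hinj : Function.Injective f := by
    intro e₁ e₂ h
    have h1 : partM (pairFin e₁.1) = partM (pairFin e₂.1) :=
      congrArg (fun x => x.1.1) h
    have h2 : pairFin e₁.1 ∈ partM (pairFin e₂.1) := h1 ▸ pmem _
    have h3 : pairFin e₁.1 = pairFin e₂.1 :=
      mem_partM_card h2 (by rw [ecard e₁.1 e₁.2])
    exact Subtype.ext (pairFin_inj h3)
  have hsurj : Function.Surjective f := by
    rintro ⟨P, hP⟩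
    obtain ⟨hne, v, hv⟩ := hP
    have hPne : P.1 ≠ (Finset.univ : Finset V).val.map (fun v : V => ({v} : Finset V)) :=
      fun h => hne (Subtype.ext (hQ.trans h.symm))
    have hv' : eraseVtx P.1 v
        = eraseVtx ((Finset.univ : Finset V).val.map (fun v : V => ({v} : Finset V))) v := by
      rw [← hQ]; exact hv.symm
    obtain ⟨u, huv, humem, hPeq⟩ := classify P.2.2.1 hPne hv'
    have hGadj : (Gᶜ).Adj u v := by
      rw [compl_adj]
      refine ⟨huv, P.2.2.2 _ humem u ?_ v ?_⟩ <;> simp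
    refine ⟨⟨s(u, v), hGadj⟩, ?_⟩
    apply Subtype.ext
    apply Subtype.ext
    show partM (pairFin s(u, v)) = P.1
    rw [pairFin_mk, hPeq]
  have hbij : Function.Bijective f := ⟨hinj, hsurj⟩
  refine ⟨(SimpleGraph.Iso.symm ⟨Equiv.ofBijective f hbij, ?_⟩ :)⟩
  intro e₁ e₂
  show (bellGraph G (Fintype.card V)).Adj (f e₁).1 (f e₂).1 ↔ (Gᶜ).lineGraph.Adj e₁ e₂
  constructor
  · rintro ⟨hne', w, hw⟩
    have hne2 : pairFin e₁.1 ≠ pairFin e₂.1 := by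
      intro h
      exact hne' (Subtype.ext (show partM (pairFin e₁.1) = partM (pairFin e₂.1) by rw [h]))
    obtain ⟨hw1, hw2⟩ := shared_of_erase_eq (ecard e₁.1 e₁.2) (ecard e₂.1 e₂.2) hne2 hw
    rw [lineGraph_adj_iff_exists]
    exact ⟨fun h => hne2 (by rw [h]), w, mem_pairFin.mp hw1, mem_pairFin.mp hw2⟩
  · intro h
    rw [lineGraph_adj_iff_exists] at h
    obtain ⟨hne', w, hw1, hw2⟩ := h
    refine ⟨?_, w, ?_⟩
    · intro hEq
      have h1 : partM (pairFin e₁.1) = partM (pairFin e₂.1) := congrArg Subtype.val hEq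
      have h2 : pairFin e₁.1 ∈ partM (pairFin e₂.1) := h1 ▸ pmem _
      exact hne' (Subtype.ext (pairFin_inj (mem_partM_card h2 (by rw [ecard e₁.1 e₁.2]))))
    · rw [erase_partM (mem_pairFin.mpr hw1) (ecard e₁.1 e₁.2),
        erase_partM (mem_pairFin.mpr hw2) (ecard e₂.1 e₂.2)]
end
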